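/- arXiv:2005.00511 — 4 statements merged into one kernel-verified Lean document; each statement's English description precedes it below -/
import Mathlib

section
/- (Delocalization after randomized Hadamard transform.) For every D > 0 there exists a constant C > 0 such that for all n ≥ 2 and every unit vector w ∈ ℝ^n, P( ‖n^{−1/2}·H D w‖_∞ > C·(log n)/√n ) ≤ n^{−D}. -/
open MeasureTheory ProbabilityTheory Matrix Filter Real

lemma my_integrable_dirac (f : ℝ → ℝ) (hf : Measurable f) (x : ℝ) :
    Integrable f (Measure.dirac x) := by
  constructor
  · exact hf.aestronglyMeasurable
  · rw [HasFiniteIntegral, MeasureTheory.lintegral_dirac]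
    exact ENNReal.coe_lt_top

lemma rademacher_chernoff {Ω : Type} [MeasurableSpace Ω] {P : Measure Ω}
    [IsProbabilityMeasure P] {n : ℕ} {a : Ω → Fin n → ℝ}
    (ha : Measurable a)
    (hind : iIndepFun (fun (l : Fin n) => fun ω => a ω l) P)
    (hdist : ∀ l : Fin n, Measure.map (fun ω => a ω l) P =
      (1 / 2 : ENNReal) • Measure.dirac (1 : ℝ) + (1 / 2 : ENNReal) • Measure.dirac (-1 : ℝ))
    (c : Fin n → ℝ) (hc : ∑ l, c l ^ 2 ≤ 1) (ε : ℝ) (hε : 0 ≤ ε) :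
    (P {ω | ε ≤ ∑ l, c l * a ω l}).toReal ≤ Real.exp (-(ε ^ 2) / 2) := by
  set Y : Fin n → Ω → ℝ := fun l ω => c l * a ω l with hY
  have hal : ∀ l : Fin n, Measurable (fun ω => a ω l) :=
    fun l => (measurable_pi_apply l).comp ha
  have hYmeas : ∀ l, Measurable (Y l) := fun l => (hal l).const_mul (c l)
  have hYind : iIndepFun Y P := by
    have := hind.comp (fun l (x : ℝ) => c l * x) (fun l => measurable_const_mul (c l))
    exact this
  -- integrability of exp moment
  have hint : ∀ (t : ℝ) (l : Fin n), Integrable (fun ω => Real.exp (t * Y l ω)) P := by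
    intro t l
    have hg : Measurable (fun x : ℝ => Real.exp (t * (c l * x))) := by fun_prop
    have h1 : Integrable (fun x : ℝ => Real.exp (t * (c l * x)))
        (Measure.map (fun ω => a ω l) P) := by
      rw [hdist l]
      exact ((my_integrable_dirac _ hg 1).smul_measure (by norm_num)).add_measure
        ((my_integrable_dirac _ hg (-1)).smul_measure (by norm_num))
    have := (integrable_map_measure hg.aestronglyMeasurable (hal l).aemeasurable).mp h1
    exact this
  -- mgf bound per coordinate
  have hmgf : ∀ (t : ℝ) (l : Fin n), mgf (Y l) P t ≤ Real.exp ((t * c l) ^ 2 / 2) := by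
    intro t l
    have hg : Measurable (fun x : ℝ => Real.exp (t * (c l * x))) := by fun_prop
    have hmap : mgf (Y l) P t
        = ∫ x, Real.exp (t * (c l * x)) ∂(Measure.map (fun ω => a ω l) P) := by
      rw [mgf, integral_map (hal l).aemeasurable hg.aestronglyMeasurable]
    rw [hmap, hdist l, integral_add_measure
        ((my_integrable_dirac _ hg 1).smul_measure (by norm_num))
        ((my_integrable_dirac _ hg (-1)).smul_measure (by norm_num)),
      integral_smul_measure, integral_smul_measure, integral_dirac, integral_dirac]
    have h2 : ((1 / 2 : ENNReal)).toReal = (1 / 2 : ℝ) := by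
      simp
    rw [h2]
    have := Real.cosh_le_exp_half_sq (t * c l)
    rw [Real.cosh_eq] at this
    calc (1 / 2 : ℝ) • Real.exp (t * (c l * 1)) + (1 / 2 : ℝ) • Real.exp (t * (c l * -1))
        = (Real.exp (t * c l) + Real.exp (-(t * c l))) / 2 := by
          simp [smul_eq_mul]; ring
      _ ≤ Real.exp ((t * c l) ^ 2 / 2) := this
  -- sum
  have hsum_eq : (fun ω => ∑ l, c l * a ω l) = ∑ l, Y l := by
    funext ω; simp [hY, Finset.sum_apply]
  have hmgfsum : mgf (∑ l, Y l) P ε ≤ Real.exp (ε ^ 2 / 2) := by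
    rw [hYind.mgf_sum hYmeas]
    calc ∏ l, mgf (Y l) P ε ≤ ∏ l, Real.exp ((ε * c l) ^ 2 / 2) :=
          Finset.prod_le_prod (fun l _ => mgf_nonneg) (fun l _ => hmgf ε l)
      _ = Real.exp (∑ l, (ε * c l) ^ 2 / 2) := by rw [← Real.exp_sum]
      _ ≤ Real.exp (ε ^ 2 / 2) := by
          apply Real.exp_le_exp.mpr
          have : ∑ l, (ε * c l) ^ 2 / 2 = ε ^ 2 / 2 * ∑ l, c l ^ 2 := by
            rw [Finset.mul_sum]; congr 1; funext l; ring
          rw [this]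
          nlinarith [sq_nonneg ε]
  have hcher := measure_ge_le_exp_mul_mgf (X := ∑ l, Y l) (μ := P) ε hε
    (hYind.integrable_exp_mul_sum hYmeas (fun l _ => hint ε l))
  calc (P {ω | ε ≤ ∑ l, c l * a ω l}).toReal
      ≤ Real.exp (-ε * ε) * mgf (∑ l, Y l) P ε := by
        have hset : {ω | ε ≤ ∑ l, c l * a ω l} = {ω | ε ≤ (∑ l, Y l) ω} := by
          ext ω; simp [hY, Finset.sum_apply]
        rw [hset]; exact hcher
    _ ≤ Real.exp (-ε * ε) * Real.exp (ε ^ 2 / 2) := by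
        exact mul_le_mul_of_nonneg_left hmgfsum (Real.exp_nonneg _)
    _ = Real.exp (-(ε ^ 2) / 2) := by rw [← Real.exp_add]; ring_nf

lemma rademacher_two_sided {Ω : Type} [MeasurableSpace Ω] {P : Measure Ω}
    [IsProbabilityMeasure P] {n : ℕ} {a : Ω → Fin n → ℝ}
    (ha : Measurable a)
    (hind : iIndepFun (fun (l : Fin n) => fun ω => a ω l) P)
    (hdist : ∀ l : Fin n, Measure.map (fun ω => a ω l) P =
      (1 / 2 : ENNReal) • Measure.dirac (1 : ℝ) + (1 / 2 : ENNReal) • Measure.dirac (-1 : ℝ))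
    (c : Fin n → ℝ) (hc : ∑ l, c l ^ 2 ≤ 1) (ε : ℝ) (hε : 0 ≤ ε) :
    P {ω | ε < |∑ l, c l * a ω l|} ≤ ENNReal.ofReal (2 * Real.exp (-(ε ^ 2) / 2)) := by
  have hsub : {ω | ε < |∑ l, c l * a ω l|} ⊆
      {ω | ε ≤ ∑ l, c l * a ω l} ∪ {ω | ε ≤ ∑ l, (-c l) * a ω l} := by
    intro ω hω
    simp only [Set.mem_setOf_eq, Set.mem_union] at hω ⊢
    rcases le_abs.mp (le_of_lt hω) with h | h
    · exact Or.inl h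
    · refine Or.inr ?_
      simpa [neg_mul, ← Finset.sum_neg_distrib] using h
  have hc' : ∑ l, (-c l) ^ 2 ≤ 1 := by simpa using hc
  have h1 := rademacher_chernoff ha hind hdist c hc ε hε
  have h2 := rademacher_chernoff ha hind hdist (fun l => -c l) hc' ε hε
  have e1 : P {ω | ε ≤ ∑ l, c l * a ω l} ≤ ENNReal.ofReal (Real.exp (-(ε ^ 2) / 2)) := by
    rw [← ENNReal.ofReal_toReal (measure_ne_top P _)]
    exact ENNReal.ofReal_le_ofReal h1
  have e2 : P {ω | ε ≤ ∑ l, (-c l) * a ω l} ≤ ENNReal.ofReal (Real.exp (-(ε ^ 2) / 2)) := by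
    rw [← ENNReal.ofReal_toReal (measure_ne_top P _)]
    exact ENNReal.ofReal_le_ofReal h2
  calc P {ω | ε < |∑ l, c l * a ω l|}
      ≤ P ({ω | ε ≤ ∑ l, c l * a ω l} ∪ {ω | ε ≤ ∑ l, (-c l) * a ω l}) := measure_mono hsub
    _ ≤ P {ω | ε ≤ ∑ l, c l * a ω l} + P {ω | ε ≤ ∑ l, (-c l) * a ω l} := measure_union_le _ _
    _ ≤ ENNReal.ofReal (Real.exp (-(ε ^ 2) / 2)) + ENNReal.ofReal (Real.exp (-(ε ^ 2) / 2)) :=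
        add_le_add e1 e2
    _ = ENNReal.ofReal (2 * Real.exp (-(ε ^ 2) / 2)) := by
        rw [← ENNReal.ofReal_add (Real.exp_nonneg _) (Real.exp_nonneg _)]; ring_nf

lemma numeric_bound (D : ℝ) (hD : 0 < D) (n : ℕ) (hn : 2 ≤ n) :
    (n : ℝ) * (2 * Real.exp (-((Real.sqrt (2 * (D + 2) / Real.log 2) * Real.log n) ^ 2) / 2))
      ≤ (n : ℝ) ^ (-D) := by
  have hlog2 : 0 < Real.log 2 := Real.log_pos one_lt_two
  have hn0 : (0 : ℝ) < n := by positivity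
  have hn2 : (2 : ℝ) ≤ (n : ℝ) := by exact_mod_cast hn
  have hL2 : Real.log 2 ≤ Real.log n := Real.log_le_log (by norm_num) hn2
  have hL0 : 0 < Real.log n := lt_of_lt_of_le hlog2 hL2
  have hC2 : Real.sqrt (2 * (D + 2) / Real.log 2) ^ 2 = 2 * (D + 2) / Real.log 2 :=
    Real.sq_sqrt (by positivity)
  have hkey : (D + 2) * Real.log n ≤
      (Real.sqrt (2 * (D + 2) / Real.log 2) * Real.log n) ^ 2 / 2 := by
    have heq : 2 * (D + 2) / Real.log 2 * Real.log n ^ 2 / 2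
        = (D + 2) * (Real.log n ^ 2 / Real.log 2) := by
      field_simp
    rw [mul_pow, hC2, heq]
    apply mul_le_mul_of_nonneg_left _ (by linarith : (0:ℝ) ≤ D + 2)
    rw [le_div_iff₀ hlog2]
    nlinarith
  have hexp : Real.exp (-((Real.sqrt (2 * (D + 2) / Real.log 2) * Real.log n) ^ 2) / 2)
      ≤ (n : ℝ) ^ (-(D + 2)) := by
    rw [Real.rpow_def_of_pos hn0]
    apply Real.exp_le_exp.mpr
    nlinarith [hkey]
  have hsplit : (n : ℝ) ^ (-(D + 2)) = (n : ℝ) ^ (-D) * ((n : ℝ) ^ 2)⁻¹ := by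
    have : (-(D + 2)) = -D + (-2 : ℝ) := by ring
    rw [this, Real.rpow_add hn0]
    congr 1
    rw [Real.rpow_neg hn0.le, show ((2 : ℝ)) = ((2 : ℕ) : ℝ) by norm_num,
      Real.rpow_natCast]
  have hA : (0 : ℝ) ≤ (n : ℝ) ^ (-D) := Real.rpow_nonneg hn0.le _
  calc (n : ℝ) * (2 * Real.exp (-((Real.sqrt (2 * (D + 2) / Real.log 2) * Real.log n) ^ 2) / 2))
      ≤ (n : ℝ) * (2 * ((n : ℝ) ^ (-D) * ((n : ℝ) ^ 2)⁻¹)) := by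
        rw [← hsplit]
        have := mul_le_mul_of_nonneg_left hexp (by norm_num : (0:ℝ) ≤ 2)
        exact mul_le_mul_of_nonneg_left this hn0.le
    _ = (2 * (n : ℝ) / (n : ℝ) ^ 2) * (n : ℝ) ^ (-D) := by field_simp
    _ ≤ 1 * (n : ℝ) ^ (-D) := by
        apply mul_le_mul_of_nonneg_right _ hA
        rw [div_le_one (by positivity)]
        nlinarith
    _ = (n : ℝ) ^ (-D) := one_mul _

/-- **Delocalization after a randomized Hadamard transform.** For every `D > 0` there is
`C > 0` such that for all `n ≥ 2`, any `n × n` Hadamard matrix `H` (entries `±1`,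
`H Hᵀ = n I`), i.i.d. Rademacher signs `a`, and any unit vector `w ∈ ℝⁿ`,
`P(‖n^{-1/2} H D w‖_∞ > C log n / √n) ≤ n^{-D}`. -/
theorem hadamard_delocalization :
    ∀ D : ℝ, 0 < D → ∃ C : ℝ, 0 < C ∧
      ∀ n : ℕ, 2 ≤ n →
      ∀ H : Matrix (Fin n) (Fin n) ℝ,
        (∀ i j, H i j = 1 ∨ H i j = -1) →
        H * Hᵀ = (n : ℝ) • 1 →
      ∀ (Ω : Type) [MeasurableSpace Ω] (P : Measure Ω), IsProbabilityMeasure P →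
      ∀ a : Ω → Fin n → ℝ,
        Measurable a →
        iIndepFun (fun (l : Fin n) => fun ω => a ω l) P →
        (∀ l : Fin n,
          Measure.map (fun ω => a ω l) P =
            (1 / 2 : ENNReal) • Measure.dirac (1 : ℝ) +
              (1 / 2 : ENNReal) • Measure.dirac (-1 : ℝ)) →
      ∀ w : Fin n → ℝ, w ⬝ᵥ w = 1 →
        P {ω | C * Real.log n / Real.sqrt n <
            ⨆ i : Fin n,
              |(Real.sqrt n)⁻¹ * (H * Matrix.diagonal (a ω)).mulVec w i|} ≤
          ENNReal.ofReal ((n : ℝ) ^ (-D)) := by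
  intro D hD
  have hlog2 : 0 < Real.log 2 := Real.log_pos one_lt_two
  refine ⟨Real.sqrt (2 * (D + 2) / Real.log 2), Real.sqrt_pos.mpr (by positivity), ?_⟩
  intro n hn H hH _hHad Ω _ P hP a ha hind hdist w hw
  set C := Real.sqrt (2 * (D + 2) / Real.log 2) with hCdef
  have hn0 : (0 : ℝ) < n := by positivity
  have hn1 : (1 : ℝ) < n := by
    have : (2 : ℝ) ≤ (n : ℝ) := by exact_mod_cast hn
    linarith
  have hsqn : 0 < Real.sqrt n := Real.sqrt_pos.mpr hn0
  have hlogn : 0 < Real.log n := Real.log_pos hn1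
  set ε := C * Real.log n with hεdef
  have hε0 : 0 ≤ ε := by positivity
  -- coefficient bound
  have hc : ∀ i : Fin n, ∑ l, (H i l * w l) ^ 2 ≤ 1 := by
    intro i
    have heq : ∀ l : Fin n, (H i l * w l) ^ 2 = w l * w l := by
      intro l; rcases hH i l with h | h <;> rw [h] <;> ring
    rw [Finset.sum_congr rfl (fun l _ => heq l)]
    rw [show (∑ l, w l * w l) = w ⬝ᵥ w from rfl, hw]
  -- event inclusion
  have hev : {ω | ε / Real.sqrt n <
      ⨆ i : Fin n, |(Real.sqrt n)⁻¹ * (H * Matrix.diagonal (a ω)).mulVec w i|} ⊆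
      ⋃ i : Fin n, {ω | ε < |∑ l, (H i l * w l) * a ω l|} := by
    intro ω hω
    simp only [Set.mem_setOf_eq] at hω
    haveI : Nonempty (Fin n) := ⟨⟨0, by omega⟩⟩
    obtain ⟨i, hi⟩ := (lt_ciSup_iff (Set.finite_range _).bddAbove).mp hω
    refine Set.mem_iUnion.mpr ⟨i, ?_⟩
    simp only [Set.mem_setOf_eq]
    have hMi : (H * Matrix.diagonal (a ω)).mulVec w i = ∑ l, (H i l * w l) * a ω l := by
      simp only [Matrix.mulVec, dotProduct, Matrix.mul_diagonal]
      exact Finset.sum_congr rfl (fun l _ => by ring)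
    rw [hMi, abs_mul, abs_inv, abs_of_nonneg (Real.sqrt_nonneg _), inv_mul_eq_div] at hi
    exact (div_lt_div_iff_of_pos_right hsqn).mp hi
  calc P {ω | ε / Real.sqrt n <
        ⨆ i : Fin n, |(Real.sqrt n)⁻¹ * (H * Matrix.diagonal (a ω)).mulVec w i|}
      ≤ P (⋃ i : Fin n, {ω | ε < |∑ l, (H i l * w l) * a ω l|}) := measure_mono hev
    _ ≤ ∑' i : Fin n, P {ω | ε < |∑ l, (H i l * w l) * a ω l|} := measure_iUnion_le _
    _ = ∑ i : Fin n, P {ω | ε < |∑ l, (H i l * w l) * a ω l|} := tsum_fintype _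
    _ ≤ ∑ _i : Fin n, ENNReal.ofReal (2 * Real.exp (-(ε ^ 2) / 2)) :=
        Finset.sum_le_sum (fun i _ =>
          rademacher_two_sided ha hind hdist (fun l => H i l * w l) (hc i) ε hε0)
    _ = (n : ENNReal) * ENNReal.ofReal (2 * Real.exp (-(ε ^ 2) / 2)) := by
        rw [Finset.sum_const, Finset.card_univ, Fintype.card_fin, nsmul_eq_mul]
    _ = ENNReal.ofReal ((n : ℝ) * (2 * Real.exp (-(ε ^ 2) / 2))) := by
        rw [ENNReal.ofReal_mul hn0.le, ENNReal.ofReal_natCast]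
    _ ≤ ENNReal.ofReal ((n : ℝ) ^ (-D)) :=
        ENNReal.ofReal_le_ofReal (by simpa [hεdef, hCdef] using numeric_bound D hD n hn)
end

section
/- (Explicit solution and inverse of the self-consistent equation for orthogonal sketching.) Fix γ > 0 and ξ ∈ (0,1) and set λ_± := (√γ ± √ξ)². Then: (a) for every z ∈ ℂ with Im z > 0, the quadratic z·m² + (z − γ + ξ)·m + ξ = 0 has exactly one root m with Im m ≥ 0, and this root has Im m > 0; (b) the map m_{2c}(x) := (−(x − γ + ξ) + √((x − λ_+)(x − λ_−)))/(2x) (with the nonnegative real square root) is a strictly increasing bijection from (λ_+, ∞) onto (−√ξ/(√γ + √ξ), 0), it satisfies x·m_{2c}(x)² + (x − γ + ξ)·m_{2c}(x) + ξ = 0 for all x > λ_+, its inverse is g_{2c}(m) := γ/(1 + m) − ξ/m, and lim_{x→λ_+⁺} m_{2c}(x) = −√ξ/(√γ + √ξ). -/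
open Filter Set

section auxA

open Complex

private lemma aux_im (γ ξ : ℝ) (z m : ℂ)
    (hm : z * m ^ 2 + (z - (γ : ℂ) + (ξ : ℂ)) * m + (ξ : ℂ) = 0) :
    z.im * (normSq m * normSq (m + 1)) =
      m.im * (ξ * normSq (m + 1) - γ * normSq m) := by
  have hre := congrArg Complex.re hm
  have him := congrArg Complex.im hm
  simp [Complex.mul_re, Complex.mul_im, Complex.add_re, Complex.add_im,
    Complex.sub_re, Complex.sub_im, pow_two, Complex.normSq_apply] at hre him ⊢
  linear_combination (m.re * (m.re + 1) - m.im ^ 2) * him +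
    (-(m.im * (2 * m.re + 1))) * hre

private lemma aux_ne0 (γ ξ : ℝ) (hγ : 0 < γ) (hξ0 : 0 < ξ) (z m : ℂ)
    (hm : z * m ^ 2 + (z - (γ : ℂ) + (ξ : ℂ)) * m + (ξ : ℂ) = 0) :
    m ≠ 0 ∧ m + 1 ≠ 0 := by
  constructor
  · rintro rfl
    have : (ξ : ℂ) = 0 := by linear_combination hm
    rw [Complex.ofReal_eq_zero] at this; linarith
  · intro h
    have hm1 : m = -1 := by linear_combination h
    subst hm1
    have : (γ : ℂ) = 0 := by linear_combination hm
    rw [Complex.ofReal_eq_zero] at this; linarith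

private lemma mulcontr (γ ξ Nz N1 N2 M1 M2 : ℝ) (hγ : 0 < γ)
    (hNz : 0 < Nz) (h1 : 0 < N1) (h2 : 0 < N2)
    (hP : Nz * (N1 * N2) = ξ ^ 2) (hQ : Nz * (M1 * M2) = γ ^ 2)
    (k1 : γ * N1 < ξ * M1) (k2 : γ * N2 < ξ * M2) : False := by
  have key : (γ * N1) * (γ * N2) < (ξ * M1) * (ξ * M2) :=
    mul_lt_mul'' k1 k2 (by positivity) (by positivity)
  have := mul_lt_mul_of_pos_left key hNz
  nlinarith [hP, hQ, this]

private lemma partA (γ ξ : ℝ) (hγ : 0 < γ) (hξ0 : 0 < ξ) (z : ℂ) (hz : 0 < z.im) :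
    (∃! m : ℂ, z * m ^ 2 + (z - (γ : ℂ) + (ξ : ℂ)) * m + (ξ : ℂ) = 0 ∧ 0 ≤ m.im) ∧
    (∀ m : ℂ, z * m ^ 2 + (z - (γ : ℂ) + (ξ : ℂ)) * m + (ξ : ℂ) = 0 → 0 ≤ m.im →
      0 < m.im) := by
  have hz0 : z ≠ 0 := by rintro rfl; simp at hz
  have pos : ∀ m : ℂ, z * m ^ 2 + (z - (γ : ℂ) + (ξ : ℂ)) * m + (ξ : ℂ) = 0 →
      0 ≤ m.im → 0 < m.im := by
    intro m hm h0
    rcases h0.lt_or_eq with h | h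
    · exact h
    · exfalso
      obtain ⟨hm0, hm1⟩ := aux_ne0 γ ξ hγ hξ0 z m hm
      have h1 := aux_im γ ξ z m hm
      have p1 : 0 < normSq m := normSq_pos.mpr hm0
      have p2 : 0 < normSq (m + 1) := normSq_pos.mpr hm1
      rw [← h] at h1
      nlinarith [h1, mul_pos hz (mul_pos p1 p2)]
  have noreal : ∀ m : ℂ, z * m ^ 2 + (z - (γ : ℂ) + (ξ : ℂ)) * m + (ξ : ℂ) = 0 →
      m.im ≠ 0 := by
    intro m hm h
    exact absurd (h ▸ pos m hm h.ge) (by simp [h])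
  have key : ∀ m : ℂ, z * m ^ 2 + (z - (γ : ℂ) + (ξ : ℂ)) * m + (ξ : ℂ) = 0 →
      0 < m.im → γ * normSq m < ξ * normSq (m + 1) := by
    intro m hm him
    obtain ⟨hm0, hm1⟩ := aux_ne0 γ ξ hγ hξ0 z m hm
    have h1 := aux_im γ ξ z m hm
    have p1 : 0 < normSq m := normSq_pos.mpr hm0
    have p2 : 0 < normSq (m + 1) := normSq_pos.mpr hm1
    nlinarith [h1, mul_pos hz (mul_pos p1 p2)]
  have key' : ∀ m : ℂ, z * m ^ 2 + (z - (γ : ℂ) + (ξ : ℂ)) * m + (ξ : ℂ) = 0 →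
      m.im < 0 → ξ * normSq (m + 1) < γ * normSq m := by
    intro m hm him
    obtain ⟨hm0, hm1⟩ := aux_ne0 γ ξ hγ hξ0 z m hm
    have h1 := aux_im γ ξ z m hm
    have p1 : 0 < normSq m := normSq_pos.mpr hm0
    have p2 : 0 < normSq (m + 1) := normSq_pos.mpr hm1
    nlinarith [h1, mul_pos hz (mul_pos p1 p2)]
  have hNz : 0 < normSq z := normSq_pos.mpr hz0
  have nsq : ∀ (w : ℂ) (c : ℝ), z * w = (c : ℂ) → normSq z * normSq w = c ^ 2 := by
    intro w c h
    have := congrArg normSq h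
    rw [map_mul, Complex.normSq_ofReal] at this
    rw [this]; ring
  obtain ⟨w, hw⟩ := IsAlgClosed.exists_pow_nat_eq (discrim z (z - (γ:ℂ) + ξ) ξ) two_pos
  have hw' : discrim z (z - (γ:ℂ) + ξ) ξ = w * w := by rw [← hw]; ring
  have hw2 : w ^ 2 = (z - (γ:ℂ) + ξ) ^ 2 - 4 * z * ξ := by
    rw [hw]; rfl
  set r₁ : ℂ := (-(z - (γ:ℂ) + ξ) + w) / (2 * z) with hr₁
  set r₂ : ℂ := (-(z - (γ:ℂ) + ξ) - w) / (2 * z) with hr₂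
  have e1 : z * r₁ ^ 2 + (z - (γ:ℂ) + ξ) * r₁ + ξ = 0 := by
    have := (quadratic_eq_zero_iff hz0 hw' r₁).mpr (Or.inl rfl)
    linear_combination this
  have e2 : z * r₂ ^ 2 + (z - (γ:ℂ) + ξ) * r₂ + ξ = 0 := by
    have := (quadratic_eq_zero_iff hz0 hw' r₂).mpr (Or.inr rfl)
    linear_combination this
  have hP : z * (r₁ * r₂) = (ξ : ℂ) := by
    rw [hr₁, hr₂]
    field_simp
    linear_combination (-1) * hw2
  have hQ : z * ((r₁ + 1) * (r₂ + 1)) = (γ : ℂ) := by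
    rw [hr₁, hr₂]
    field_simp
    linear_combination (-1) * hw2
  have hnQ' : normSq z * (normSq (r₁ + 1) * normSq (r₂ + 1)) = γ ^ 2 := by
    have := nsq _ _ hQ; rwa [map_mul] at this
  have hnP' : normSq z * (normSq r₁ * normSq r₂) = ξ ^ 2 := by
    have := nsq _ _ hP; rwa [map_mul] at this
  have exroot : ∃ m : ℂ, (z * m ^ 2 + (z - (γ:ℂ) + ξ) * m + ξ = 0) ∧ 0 < m.im := by
    rcases lt_or_ge 0 r₁.im with h1 | h1
    · exact ⟨r₁, e1, h1⟩
    rcases lt_or_ge 0 r₂.im with h2 | h2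
    · exact ⟨r₂, e2, h2⟩
    exfalso
    have h1' : r₁.im < 0 := lt_of_le_of_ne h1 (noreal r₁ e1)
    have h2' : r₂.im < 0 := lt_of_le_of_ne h2 (noreal r₂ e2)
    obtain ⟨p10, p11⟩ := aux_ne0 γ ξ hγ hξ0 z r₁ e1
    obtain ⟨p20, p21⟩ := aux_ne0 γ ξ hγ hξ0 z r₂ e2
    exact mulcontr ξ γ (normSq z) (normSq (r₁ + 1)) (normSq (r₂ + 1))
      (normSq r₁) (normSq r₂) hξ0 hNz (normSq_pos.mpr p11) (normSq_pos.mpr p21)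
      hnQ' hnP' (key' r₁ e1 h1') (key' r₂ e2 h2')
  obtain ⟨m₀, hm₀, him₀⟩ := exroot
  have uniq : ∀ m m' : ℂ, z * m ^ 2 + (z - (γ:ℂ) + ξ) * m + ξ = 0 →
      z * m' ^ 2 + (z - (γ:ℂ) + ξ) * m' + ξ = 0 → 0 < m.im → 0 < m'.im → m = m' := by
    intro m m' hm hm' him him'
    by_contra hne
    have hfac : (m - m') * (z * (m + m') + (z - (γ:ℂ) + ξ)) = 0 := by
      linear_combination hm - hm'
    have hsum : z * (m + m') + (z - (γ:ℂ) + ξ) = 0 := by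
      rcases mul_eq_zero.mp hfac with h | h
      · exact absurd (sub_eq_zero.mp h) hne
      · exact h
    have hPu : z * (m * m') = (ξ : ℂ) := by linear_combination m * hsum - hm
    have hQu : z * ((m + 1) * (m' + 1)) = (γ : ℂ) := by linear_combination hPu + hsum
    have hnPu : normSq z * (normSq m * normSq m') = ξ ^ 2 := by
      have := nsq _ _ hPu; rwa [map_mul] at this
    have hnQu : normSq z * (normSq (m + 1) * normSq (m' + 1)) = γ ^ 2 := by
      have := nsq _ _ hQu; rwa [map_mul] at this
    obtain ⟨p10, p11⟩ := aux_ne0 γ ξ hγ hξ0 z m hm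
    obtain ⟨p20, p21⟩ := aux_ne0 γ ξ hγ hξ0 z m' hm'
    exact mulcontr γ ξ (normSq z) (normSq m) (normSq m') (normSq (m + 1))
      (normSq (m' + 1)) hγ hNz (normSq_pos.mpr p10) (normSq_pos.mpr p20)
      hnPu hnQu (key m hm him) (key m' hm' him')
  refine ⟨⟨m₀, ⟨hm₀, him₀.le⟩, ?_⟩, pos⟩
  rintro m' ⟨hm', h0'⟩
  exact uniq m' m₀ hm' hm₀ (pos m' hm' h0') him₀

end auxA

private lemma auxB1 (g s x : ℝ) (hg : 0 < g) (hs : 0 < s) (hx : (g + s) ^ 2 < x) :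
    (x * ((-(x - g ^ 2 + s ^ 2) +
        Real.sqrt ((x - (g + s) ^ 2) * (x - (g - s) ^ 2))) / (2 * x)) ^ 2 +
      (x - g ^ 2 + s ^ 2) * ((-(x - g ^ 2 + s ^ 2) +
        Real.sqrt ((x - (g + s) ^ 2) * (x - (g - s) ^ 2))) / (2 * x)) + s ^ 2 = 0) ∧
    (-(s / (g + s)) < (-(x - g ^ 2 + s ^ 2) +
        Real.sqrt ((x - (g + s) ^ 2) * (x - (g - s) ^ 2))) / (2 * x) ∧
      (-(x - g ^ 2 + s ^ 2) +
        Real.sqrt ((x - (g + s) ^ 2) * (x - (g - s) ^ 2))) / (2 * x) < 0) ∧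
    g ^ 2 / (1 + (-(x - g ^ 2 + s ^ 2) +
        Real.sqrt ((x - (g + s) ^ 2) * (x - (g - s) ^ 2))) / (2 * x)) -
      s ^ 2 / ((-(x - g ^ 2 + s ^ 2) +
        Real.sqrt ((x - (g + s) ^ 2) * (x - (g - s) ^ 2))) / (2 * x)) = x := by
  have hx0 : 0 < x := lt_trans (by positivity) hx
  have hD : 0 < (x - (g + s) ^ 2) * (x - (g - s) ^ 2) := by
    have h1 : 0 < x - (g + s) ^ 2 := by linarith
    have h2 : 0 < x - (g - s) ^ 2 := by nlinarith [mul_pos hg hs]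
    exact mul_pos h1 h2
  set r := Real.sqrt ((x - (g + s) ^ 2) * (x - (g - s) ^ 2)) with hrdef
  have hr2 : r ^ 2 = (x - (g + s) ^ 2) * (x - (g - s) ^ 2) := Real.sq_sqrt hD.le
  have hr0 : 0 < r := Real.sqrt_pos.mpr hD
  have hb : 0 < x - g ^ 2 + s ^ 2 := by nlinarith [mul_pos hg hs]
  have hrb : r < x - g ^ 2 + s ^ 2 := by
    have hbr : r ^ 2 < (x - g ^ 2 + s ^ 2) ^ 2 := by
      nlinarith [hr2, mul_pos (mul_pos hs hs) hx0]
    exact lt_of_pow_lt_pow_left₀ 2 hb.le hbr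
  set m := (-(x - g ^ 2 + s ^ 2) + r) / (2 * x) with hmdef
  have hmneg : m < 0 := div_neg_of_neg_of_pos (by linarith) (by linarith)
  have hmlb : -(s / (g + s)) < m := by
    have hA : ((x - g ^ 2 + s ^ 2) * (g + s) - 2 * x * s) < r * (g + s) := by
      nlinarith [hr2, mul_pos hr0 (by linarith : (0:ℝ) < g + s), mul_pos hx0 (mul_pos hg hs),
        sq_nonneg (r * (g + s) - ((x - g ^ 2 + s ^ 2) * (g + s) - 2 * x * s))]
    rw [hmdef, neg_lt, ← neg_div, div_lt_div_iff₀ (by linarith) (by linarith)]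
    nlinarith [hA]
  have hquad : x * m ^ 2 + (x - g ^ 2 + s ^ 2) * m + s ^ 2 = 0 := by
    rw [hmdef]
    field_simp
    nlinarith [hr2]
  refine ⟨hquad, ⟨hmlb, hmneg⟩, ?_⟩
  have hm0 : m ≠ 0 := hmneg.ne
  have h1m : 0 < 1 + m := by
    have hd1 : s / (g + s) < 1 := by
      rw [div_lt_one (by linarith)]; linarith
    linarith
  field_simp
  nlinarith [hquad]

private lemma auxB2 (g s m x : ℝ) (hg : 0 < g) (hs : 0 < s)
    (hm1 : -(s / (g + s)) < m) (hm2 : m < 0)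
    (hxdef : x = g ^ 2 / (1 + m) - s ^ 2 / m) :
    (g + s) ^ 2 < x ∧
    (-(x - g ^ 2 + s ^ 2) +
      Real.sqrt ((x - (g + s) ^ 2) * (x - (g - s) ^ 2))) / (2 * x) = m := by
  have hgs : 0 < g + s := by linarith
  have h1m : 0 < 1 + m := by
    have hd1 : s / (g + s) < 1 := by rw [div_lt_one hgs]; linarith
    linarith
  have hm0 : m ≠ 0 := hm2.ne
  have hσm : 0 < (g + s) * m + s := by
    have := mul_lt_mul_of_pos_left hm1 hgs
    rw [mul_neg, mul_div_cancel₀ _ hgs.ne'] at this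
    nlinarith
  have key1 : (x - (g + s) ^ 2) * (-(m * (1 + m))) = ((g + s) * m + s) ^ 2 := by
    rw [hxdef]; field_simp; ring
  have hdenpos : 0 < -(m * (1 + m)) := by nlinarith
  have hx1 : (g + s) ^ 2 < x := by nlinarith [key1, hdenpos, sq_nonneg ((g + s) * m + s), hσm]
  have hx0 : 0 < x := lt_trans (by positivity) hx1
  have hquad : x * m ^ 2 + (x - g ^ 2 + s ^ 2) * m + s ^ 2 = 0 := by
    rw [hxdef]; field_simp; ring
  have key2 : (2 * x * m + (x - g ^ 2 + s ^ 2)) * (m * (1 + m)) =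
      g ^ 2 * m ^ 2 - s ^ 2 * (1 + m) ^ 2 := by
    rw [hxdef]; field_simp; ring
  have hneg : g ^ 2 * m ^ 2 - s ^ 2 * (1 + m) ^ 2 < 0 := by
    nlinarith [mul_pos hσm (show 0 < s * (1 + m) - g * m by
      nlinarith [mul_pos hg (neg_pos.mpr hm2), mul_pos hs h1m])]
  have h2xm : 0 < 2 * x * m + (x - g ^ 2 + s ^ 2) := by nlinarith [key2, hneg]
  have hDr : (x - (g + s) ^ 2) * (x - (g - s) ^ 2) =
      (2 * x * m + (x - g ^ 2 + s ^ 2)) ^ 2 := by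
    linear_combination (-4 * x) * hquad
  have hsqrt : Real.sqrt ((x - (g + s) ^ 2) * (x - (g - s) ^ 2)) =
      2 * x * m + (x - g ^ 2 + s ^ 2) := by
    rw [hDr]; exact Real.sqrt_sq h2xm.le
  refine ⟨hx1, ?_⟩
  rw [hsqrt]
  field_simp
  ring

private lemma auxGmono (g s m m' : ℝ) (hg : 0 < g) (hs : 0 < s)
    (hm1 : -(s / (g + s)) < m) (hm2' : m' < 0) (hlt : m < m') :
    g ^ 2 / (1 + m) - s ^ 2 / m < g ^ 2 / (1 + m') - s ^ 2 / m' := by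
  have hgs : 0 < g + s := by linarith
  have hm2 : m < 0 := lt_trans hlt hm2'
  have hm1' : -(s / (g + s)) < m' := lt_trans hm1 hlt
  have hd1 : s / (g + s) < 1 := by rw [div_lt_one hgs]; linarith
  have h1m : 0 < 1 + m := by linarith
  have h1m' : 0 < 1 + m' := by linarith
  have hσm : 0 < (g + s) * m + s := by
    have := mul_lt_mul_of_pos_left hm1 hgs
    rw [mul_neg, mul_div_cancel₀ _ hgs.ne'] at this
    nlinarith
  have hσm' : 0 < (g + s) * m' + s := by
    have := mul_lt_mul_of_pos_left hm1' hgs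
    rw [mul_neg, mul_div_cancel₀ _ hgs.ne'] at this
    nlinarith
  have hm0 : m ≠ 0 := hm2.ne
  have hm0' : m' ≠ 0 := hm2'.ne
  have h1m0 : (1 : ℝ) + m ≠ 0 := h1m.ne'
  have h1m0' : (1 : ℝ) + m' ≠ 0 := h1m'.ne'
  have key : ((g ^ 2 / (1 + m') - s ^ 2 / m') - (g ^ 2 / (1 + m) - s ^ 2 / m)) *
      ((m * m') * ((1 + m) * (1 + m'))) =
      (m' - m) * (s ^ 2 * ((1 + m) * (1 + m')) - g ^ 2 * (m * m')) := by
    field_simp; ring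
  have hmm : 0 < m * m' := mul_pos_of_neg_of_neg hm2 hm2'
  have h11 : 0 < (1 + m) * (1 + m') := mul_pos h1m h1m'
  have hfac : 0 < s ^ 2 * ((1 + m) * (1 + m')) - g ^ 2 * (m * m') := by
    have a1 : g * (-m) < s * (1 + m) := by nlinarith
    have a2 : g * (-m') < s * (1 + m') := by nlinarith
    nlinarith [mul_lt_mul'' a1 a2 (by nlinarith) (by nlinarith)]
  have hQ : 0 < (m' - m) * (s ^ 2 * ((1 + m) * (1 + m')) - g ^ 2 * (m * m')) :=
    mul_pos (sub_pos.mpr hlt) hfac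
  have hΔP : 0 < ((g ^ 2 / (1 + m') - s ^ 2 / m') - (g ^ 2 / (1 + m) - s ^ 2 / m)) *
      ((m * m') * ((1 + m) * (1 + m'))) := key ▸ hQ
  rcases mul_pos_iff.mp hΔP with ⟨h, _⟩ | ⟨_, h⟩
  · linarith
  · exact absurd h (not_lt.mpr (mul_pos hmm h11).le)

/-- **Explicit solution and inverse of the self-consistent equation for orthogonal
sketching.** For `γ > 0`, `ξ ∈ (0,1)` and `λ± = (√γ ± √ξ)²`:
(a) for `Im z > 0` the quadratic `z m² + (z − γ + ξ) m + ξ = 0` has exactly one root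
with `Im m ≥ 0`, and that root has `Im m > 0`;
(b) `m₂c(x) = (−(x−γ+ξ) + √((x−λ₊)(x−λ₋)))/(2x)` is a strictly increasing bijection
from `(λ₊, ∞)` onto `(−√ξ/(√γ+√ξ), 0)`, solves the quadratic for `x > λ₊`, has inverse
`g₂c(m) = γ/(1+m) − ξ/m`, and tends to `−√ξ/(√γ+√ξ)` as `x → λ₊⁺`. -/
theorem orthogonal_selfconsistent_equation_solution
    (γ ξ : ℝ) (hγ : 0 < γ) (hξ0 : 0 < ξ) (hξ1 : ξ < 1) :
    -- (a) unique root with nonnegative imaginary part, which is in fact positive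
    (∀ z : ℂ, 0 < z.im →
      (∃! m : ℂ, z * m ^ 2 + (z - (γ : ℂ) + (ξ : ℂ)) * m + (ξ : ℂ) = 0 ∧ 0 ≤ m.im) ∧
      (∀ m : ℂ, z * m ^ 2 + (z - (γ : ℂ) + (ξ : ℂ)) * m + (ξ : ℂ) = 0 → 0 ≤ m.im →
        0 < m.im)) ∧
    -- (b) the explicit real branch beyond the right edge and its inverse
    (StrictMonoOn
        (fun x : ℝ => (-(x - γ + ξ) +
          Real.sqrt ((x - (Real.sqrt γ + Real.sqrt ξ) ^ 2) *
            (x - (Real.sqrt γ - Real.sqrt ξ) ^ 2))) / (2 * x))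
        (Set.Ioi ((Real.sqrt γ + Real.sqrt ξ) ^ 2)) ∧
      Set.BijOn
        (fun x : ℝ => (-(x - γ + ξ) +
          Real.sqrt ((x - (Real.sqrt γ + Real.sqrt ξ) ^ 2) *
            (x - (Real.sqrt γ - Real.sqrt ξ) ^ 2))) / (2 * x))
        (Set.Ioi ((Real.sqrt γ + Real.sqrt ξ) ^ 2))
        (Set.Ioo (-(Real.sqrt ξ / (Real.sqrt γ + Real.sqrt ξ))) 0) ∧
      (∀ x ∈ Set.Ioi ((Real.sqrt γ + Real.sqrt ξ) ^ 2),
        x * ((-(x - γ + ξ) +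
            Real.sqrt ((x - (Real.sqrt γ + Real.sqrt ξ) ^ 2) *
              (x - (Real.sqrt γ - Real.sqrt ξ) ^ 2))) / (2 * x)) ^ 2 +
          (x - γ + ξ) *
            ((-(x - γ + ξ) +
              Real.sqrt ((x - (Real.sqrt γ + Real.sqrt ξ) ^ 2) *
                (x - (Real.sqrt γ - Real.sqrt ξ) ^ 2))) / (2 * x)) + ξ = 0) ∧
      Set.InvOn
        (fun m : ℝ => γ / (1 + m) - ξ / m)
        (fun x : ℝ => (-(x - γ + ξ) +
          Real.sqrt ((x - (Real.sqrt γ + Real.sqrt ξ) ^ 2) *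
            (x - (Real.sqrt γ - Real.sqrt ξ) ^ 2))) / (2 * x))
        (Set.Ioi ((Real.sqrt γ + Real.sqrt ξ) ^ 2))
        (Set.Ioo (-(Real.sqrt ξ / (Real.sqrt γ + Real.sqrt ξ))) 0) ∧
      Tendsto
        (fun x : ℝ => (-(x - γ + ξ) +
          Real.sqrt ((x - (Real.sqrt γ + Real.sqrt ξ) ^ 2) *
            (x - (Real.sqrt γ - Real.sqrt ξ) ^ 2))) / (2 * x))
        (nhdsWithin ((Real.sqrt γ + Real.sqrt ξ) ^ 2)
          (Set.Ioi ((Real.sqrt γ + Real.sqrt ξ) ^ 2)))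
        (nhds (-(Real.sqrt ξ / (Real.sqrt γ + Real.sqrt ξ))))) := by
  refine ⟨fun z hz => partA γ ξ hγ hξ0 z hz, ?_⟩
  have hg : 0 < Real.sqrt γ := Real.sqrt_pos.mpr hγ
  have hs : 0 < Real.sqrt ξ := Real.sqrt_pos.mpr hξ0
  set g := Real.sqrt γ with hgdef
  set s := Real.sqrt ξ with hsdef
  have hγ2 : g ^ 2 = γ := Real.sq_sqrt hγ.le
  have hξ2 : s ^ 2 = ξ := Real.sq_sqrt hξ0.le
  simp only [← hγ2, ← hξ2]
  have hB1 := fun (x : ℝ) (hx : (g + s) ^ 2 < x) => auxB1 g s x hg hs hx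
  have hB2 := fun (m : ℝ) (hm : m ∈ Set.Ioo (-(s / (g + s))) 0) =>
    auxB2 g s m _ hg hs hm.1 hm.2 rfl
  have hmapsF : Set.MapsTo
      (fun x : ℝ => (-(x - g ^ 2 + s ^ 2) +
        Real.sqrt ((x - (g + s) ^ 2) * (x - (g - s) ^ 2))) / (2 * x))
      (Set.Ioi ((g + s) ^ 2)) (Set.Ioo (-(s / (g + s))) 0) :=
    fun x hx => ⟨(hB1 x hx).2.1.1, (hB1 x hx).2.1.2⟩
  have hmapsG : Set.MapsTo (fun m : ℝ => g ^ 2 / (1 + m) - s ^ 2 / m)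
      (Set.Ioo (-(s / (g + s))) 0) (Set.Ioi ((g + s) ^ 2)) :=
    fun m hm => (hB2 m hm).1
  have hleft : ∀ x ∈ Set.Ioi ((g + s) ^ 2),
      (fun m : ℝ => g ^ 2 / (1 + m) - s ^ 2 / m)
        ((fun x : ℝ => (-(x - g ^ 2 + s ^ 2) +
          Real.sqrt ((x - (g + s) ^ 2) * (x - (g - s) ^ 2))) / (2 * x)) x) = x :=
    fun x hx => (hB1 x hx).2.2
  have hright : ∀ m ∈ Set.Ioo (-(s / (g + s))) 0,
      (fun x : ℝ => (-(x - g ^ 2 + s ^ 2) +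
        Real.sqrt ((x - (g + s) ^ 2) * (x - (g - s) ^ 2))) / (2 * x))
        ((fun m : ℝ => g ^ 2 / (1 + m) - s ^ 2 / m) m) = m :=
    fun m hm => (hB2 m hm).2
  have hinv : Set.InvOn (fun m : ℝ => g ^ 2 / (1 + m) - s ^ 2 / m)
      (fun x : ℝ => (-(x - g ^ 2 + s ^ 2) +
        Real.sqrt ((x - (g + s) ^ 2) * (x - (g - s) ^ 2))) / (2 * x))
      (Set.Ioi ((g + s) ^ 2)) (Set.Ioo (-(s / (g + s))) 0) :=
    ⟨fun x hx => hleft x hx, fun m hm => hright m hm⟩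
  have hsmono : StrictMonoOn
      (fun x : ℝ => (-(x - g ^ 2 + s ^ 2) +
        Real.sqrt ((x - (g + s) ^ 2) * (x - (g - s) ^ 2))) / (2 * x))
      (Set.Ioi ((g + s) ^ 2)) := by
    intro x hx y hy hxy
    set Fx := (-(x - g ^ 2 + s ^ 2) +
      Real.sqrt ((x - (g + s) ^ 2) * (x - (g - s) ^ 2))) / (2 * x) with hFx
    set Fy := (-(y - g ^ 2 + s ^ 2) +
      Real.sqrt ((y - (g + s) ^ 2) * (y - (g - s) ^ 2))) / (2 * y) with hFy
    rcases lt_trichotomy Fx Fy with h | h | h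
    · exact h
    · exfalso
      have e1 := hleft x hx
      have e2 := hleft y hy
      simp only at e1 e2
      rw [← hFx] at e1
      rw [← hFy] at e2
      rw [h] at e1
      rw [e2] at e1
      exact hxy.ne e1.symm
    · exfalso
      have hmem := hmapsF hx
      have hmem' := hmapsF hy
      simp only [Set.mem_Ioo] at hmem hmem'
      rw [← hFx] at hmem
      rw [← hFy] at hmem'
      have := auxGmono g s Fy Fx hg hs hmem'.1 hmem.2 h
      have e1 := hleft x hx
      have e2 := hleft y hy
      simp only at e1 e2
      rw [← hFx] at e1
      rw [← hFy] at e2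
      rw [e1, e2] at this
      exact absurd hxy (not_lt.mpr this.le)
  refine ⟨hsmono, hinv.bijOn hmapsF hmapsG, fun x hx => (hB1 x hx).1, hinv, ?_⟩
  have hgs0 : (0 : ℝ) < g + s := by positivity
  have hcont : ContinuousAt
      (fun x : ℝ => (-(x - g ^ 2 + s ^ 2) +
        Real.sqrt ((x - (g + s) ^ 2) * (x - (g - s) ^ 2))) / (2 * x)) ((g + s) ^ 2) := by
    have h1 : Continuous (fun x : ℝ => -(x - g ^ 2 + s ^ 2) +
        Real.sqrt ((x - (g + s) ^ 2) * (x - (g - s) ^ 2))) := by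
      apply Continuous.add
      · continuity
      · exact Real.continuous_sqrt.comp (by continuity)
    exact h1.continuousAt.div (by fun_prop) (by positivity)
  have heval : (-((g + s) ^ 2 - g ^ 2 + s ^ 2) +
      Real.sqrt ((((g + s) ^ 2 : ℝ) - (g + s) ^ 2) * ((g + s) ^ 2 - (g - s) ^ 2))) /
        (2 * (g + s) ^ 2) = -(s / (g + s)) := by
    rw [show (((g + s) ^ 2 : ℝ) - (g + s) ^ 2) * ((g + s) ^ 2 - (g - s) ^ 2) = 0 by ring,
      Real.sqrt_zero]
    have hne : g + s ≠ 0 := hgs0.ne'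
    field_simp
    ring
  have h := hcont.tendsto
  rw [heval] at h
  exact h.mono_left nhdsWithin_le_nhds
end

section
/- (Angle master equation.) Let λ̃ > 0 be a simple eigenvalue of ỸᵀỸ with unit eigenvector ξ̃ ∈ ℝ^p, and let Γ be a positively oriented simple closed contour in ℂ ∖ (−∞, 0] such that: λ̃ is the only eigenvalue of ỸᵀỸ inside Γ; no eigenvalue of X̃ᵀX̃ lies inside or on Γ; and 𝒟^{−1} + z^{1/2}·AᵀG(z)A is invertible for every z on Γ. Then for every 1 ≤ j ≤ k, |⟨u_j, ξ̃⟩|² = (1/(2πi·λ̃^{1/2}))·∮_Γ e_jᵀ·𝒟^{−1}·(𝒟^{−1} + z^{1/2}·AᵀG(z)A)^{−1}·𝒟^{−1}·e_j dz, where e_j ∈ ℝ^{2k} is the j-th standard basis vector and u_j is the j-th column of U. -/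
open Matrix Metric

/-- The resolvent `G(z) = (z^{1/2} [[0, X̃ᵀ],[X̃, 0]] − z I)⁻¹` of the linearization,
over `ℂ` (principal branch of the square root). -/
noncomputable def linG {p r : ℕ} (XtC : Matrix (Fin r) (Fin p) ℂ) (z : ℂ) :
    Matrix (Fin p ⊕ Fin r) (Fin p ⊕ Fin r) ℂ :=
  (z ^ (1 / 2 : ℂ) • Matrix.fromBlocks 0 XtCᵀ XtC 0 - z • 1)⁻¹

/-- The complexified `𝒟 = [[0, D],[D, 0]]`. -/
noncomputable def dBlockC {k : ℕ} (d : Fin k → ℝ) :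
    Matrix (Fin k ⊕ Fin k) (Fin k ⊕ Fin k) ℂ :=
  (Matrix.fromBlocks 0 (Matrix.diagonal d) (Matrix.diagonal d) 0 :
    Matrix (Fin k ⊕ Fin k) (Fin k ⊕ Fin k) ℝ).map Complex.ofReal

/-- The complexified `A = [[U, 0],[0, V]]`. -/
noncomputable def aBlockC {p r k : ℕ}
    (U : Matrix (Fin p) (Fin k) ℝ) (V : Matrix (Fin r) (Fin k) ℝ) :
    Matrix (Fin p ⊕ Fin r) (Fin k ⊕ Fin k) ℂ :=
  (Matrix.fromBlocks U 0 0 V).map Complex.ofReal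

/-- The master matrix `𝒟⁻¹ + z^{1/2} Aᵀ G(z) A`. -/
noncomputable def masterM {p r k : ℕ} (Xt : Matrix (Fin r) (Fin p) ℝ)
    (U : Matrix (Fin p) (Fin k) ℝ) (V : Matrix (Fin r) (Fin k) ℝ)
    (d : Fin k → ℝ) (z : ℂ) : Matrix (Fin k ⊕ Fin k) (Fin k ⊕ Fin k) ℂ :=
  (dBlockC d)⁻¹ +
    z ^ (1 / 2 : ℂ) •
      ((aBlockC U V)ᵀ * linG (Xt.map Complex.ofReal) z * aBlockC U V)

section
open Complex

set_option linter.unusedSectionVars false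
set_option linter.unusedVariables false
set_option maxHeartbeats 1000000

section MatrixAux

variable {m n : Type*} [Fintype m] [Fintype n] [DecidableEq m] [DecidableEq n]

/-- Woodbury-type identity: explicit inverse of `B + w • (A * Dm * Aᵀ)`. -/
lemma woodbury_inv (B Binv : Matrix m m ℂ) (A : Matrix m n ℂ)
    (Dm Dinv M Minv : Matrix n n ℂ) (w : ℂ)
    (hB : B * Binv = 1)
    (hD : Dm * Dinv = 1)
    (hM : M = Dinv + w • (Aᵀ * Binv * A))
    (hMu : M * Minv = 1) :
    (B + w • (A * Dm * Aᵀ)) * (Binv - w • (Binv * A * Minv * Aᵀ * Binv)) = 1 := by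
  have hkey : ∀ X : Matrix n m ℂ,
      w • (Aᵀ * (Binv * (A * (Minv * X)))) = X - Dinv * (Minv * X) := by
    intro X
    have h1 : w • (Aᵀ * (Binv * (A * (Minv * X)))) = (w • (Aᵀ * Binv * A)) * (Minv * X) := by
      simp only [Matrix.smul_mul, Matrix.mul_assoc]
    have h2 : (w • (Aᵀ * Binv * A)) = M - Dinv := by rw [hM]; abel
    rw [h1, h2, Matrix.sub_mul, ← Matrix.mul_assoc, hMu, Matrix.one_mul]
  have h4 : (w • (A * Dm * Aᵀ)) * (w • (Binv * A * Minv * Aᵀ * Binv)) =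
      w • (A * (Dm * (Aᵀ * Binv))) - w • (A * (Minv * (Aᵀ * Binv))) := by
    have e1 : (w • (A * Dm * Aᵀ)) * (w • (Binv * A * Minv * Aᵀ * Binv)) =
        w • (A * (Dm * (w • (Aᵀ * (Binv * (A * (Minv * (Aᵀ * Binv)))))))) := by
      simp only [Matrix.smul_mul, Matrix.mul_smul, smul_smul, Matrix.mul_assoc]
    rw [e1, hkey (Aᵀ * Binv)]
    rw [Matrix.mul_sub, Matrix.mul_sub, smul_sub]
    congr 2
    rw [← Matrix.mul_assoc Dm Dinv, hD, Matrix.one_mul]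
  have h2 : B * (w • (Binv * A * Minv * Aᵀ * Binv)) = w • (A * (Minv * (Aᵀ * Binv))) := by
    simp only [Matrix.mul_smul, Matrix.mul_assoc]
    rw [← Matrix.mul_assoc B Binv, hB, Matrix.one_mul]
  have h3 : (w • (A * Dm * Aᵀ)) * Binv = w • (A * (Dm * (Aᵀ * Binv))) := by
    simp only [Matrix.smul_mul, Matrix.mul_assoc]
  calc (B + w • (A * Dm * Aᵀ)) * (Binv - w • (Binv * A * Minv * Aᵀ * Binv))
      = B * Binv - B * (w • (Binv * A * Minv * Aᵀ * Binv))
        + ((w • (A * Dm * Aᵀ)) * Binv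
          - (w • (A * Dm * Aᵀ)) * (w • (Binv * A * Minv * Aᵀ * Binv))) := by
        rw [Matrix.add_mul, Matrix.mul_sub, Matrix.mul_sub]
    _ = 1 := by rw [hB, h2, h3, h4]; abel

/-- The key identity `Dinv * Minv * Dinv = Dinv - w • (Aᵀ * W * A)` for the Woodbury
inverse `W`. -/
lemma woodbury_master (B Binv : Matrix m m ℂ) (A : Matrix m n ℂ)
    (Dm Dinv M Minv : Matrix n n ℂ) (w : ℂ)
    (hD' : Dinv * Dm = 1)
    (hM : M = Dinv + w • (Aᵀ * Binv * A))
    (hMu : M * Minv = 1) (hMu' : Minv * M = 1) :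
    Dinv * Minv * Dinv =
      Dinv - w • (Aᵀ * (Binv - w • (Binv * A * Minv * Aᵀ * Binv)) * A) := by
  have hkey : w • (Aᵀ * (Binv * (A * (Minv * (Aᵀ * (Binv * A)))))) =
      Aᵀ * (Binv * A) - Dinv * (Minv * (Aᵀ * (Binv * A))) := by
    have h1 : w • (Aᵀ * (Binv * (A * (Minv * (Aᵀ * (Binv * A)))))) =
        (w • (Aᵀ * Binv * A)) * (Minv * (Aᵀ * (Binv * A))) := by
      simp only [Matrix.smul_mul, Matrix.mul_assoc]
    have h2 : (w • (Aᵀ * Binv * A)) = M - Dinv := by rw [hM]; abel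
    rw [h1, h2, Matrix.sub_mul, ← Matrix.mul_assoc M, hMu, Matrix.one_mul]
  have e1 : w • (Aᵀ * (Binv - w • (Binv * A * Minv * Aᵀ * Binv)) * A) =
      w • (Aᵀ * (Binv * A))
        - w • (w • (Aᵀ * (Binv * (A * (Minv * (Aᵀ * (Binv * A))))))) := by
    rw [Matrix.mul_sub, Matrix.sub_mul, smul_sub]
    congr 2
    · simp only [Matrix.mul_assoc]
    · simp only [Matrix.mul_smul, Matrix.smul_mul, Matrix.mul_assoc]
  have hwS : w • (Aᵀ * (Binv * A)) = M - Dinv := by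
    rw [hM]; simp only [Matrix.mul_assoc]; abel
  have h6 : Dinv * (Minv * (w • (Aᵀ * (Binv * A)))) = Dinv - Dinv * (Minv * Dinv) := by
    rw [hwS, Matrix.mul_sub, hMu', Matrix.mul_sub, Matrix.mul_one]
  rw [e1, hkey, smul_sub]
  rw [sub_sub_cancel]
  have h7 : w • (Dinv * (Minv * (Aᵀ * (Binv * A)))) =
      Dinv * (Minv * (w • (Aᵀ * (Binv * A)))) := by
    simp only [Matrix.mul_smul]
  rw [← h7] at h6
  rw [h6, sub_sub_cancel, Matrix.mul_assoc]

end MatrixAux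

section MatrixAux2
variable {m n o : Type*} [Fintype m] [Fintype n] [Fintype o] [DecidableEq m] [DecidableEq n]

lemma cmap_mul (A : Matrix m n ℝ) (B : Matrix n o ℝ) :
    (A * B).map Complex.ofReal = A.map Complex.ofReal * B.map Complex.ofReal := by
  ext i j; simp [Matrix.mul_apply]

lemma cmap_one : (1 : Matrix n n ℝ).map Complex.ofReal = 1 := by
  ext i j; by_cases h : i = j <;> simp [Matrix.one_apply, h]

lemma cmap_add (A B : Matrix m n ℝ) :
    (A + B).map Complex.ofReal = A.map Complex.ofReal + B.map Complex.ofReal := by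
  ext i j; simp

lemma cmap_transpose (A : Matrix m n ℝ) :
    (Aᵀ).map Complex.ofReal = (A.map Complex.ofReal)ᵀ := Matrix.transpose_map

lemma cmap_diagonal (v : n → ℝ) :
    (diagonal v).map Complex.ofReal = diagonal (fun i => (v i : ℂ)) := by
  apply Matrix.diagonal_map; simp

lemma cmap_mulVec (M : Matrix m n ℝ) (v : n → ℝ) :
    (M.map Complex.ofReal) *ᵥ (fun i => (v i : ℂ)) = fun i => (((M *ᵥ v) i : ℝ) : ℂ) := by
  ext i; simp [Matrix.mulVec, dotProduct]

/-- Resolvent of a matrix diagonalized by an orthogonal matrix. -/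
lemma spectral_resolvent (O : Matrix n n ℝ) (evv : n → ℝ)
    (hO : Oᵀ * O = 1) (z : ℂ) (hz : ∀ i, z ≠ (evv i : ℂ)) :
    (z • (1 : Matrix n n ℂ) - (O * diagonal evv * Oᵀ).map Complex.ofReal) *
      (O.map Complex.ofReal * diagonal (fun i => (z - (evv i : ℂ))⁻¹) *
        (O.map Complex.ofReal)ᵀ) = 1 := by
  set OC := O.map Complex.ofReal with hOCdef
  have hOC : OCᵀ * OC = 1 := by
    rw [hOCdef, ← cmap_transpose, ← cmap_mul, hO, cmap_one]
  have hOC' : OC * OCᵀ = 1 := mul_eq_one_comm.mp hOC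
  have hmap : (O * diagonal evv * Oᵀ).map Complex.ofReal =
      OC * diagonal (fun i => (evv i : ℂ)) * OCᵀ := by
    rw [cmap_mul, cmap_mul, cmap_diagonal, cmap_transpose]
  have hone : z • (1 : Matrix n n ℂ) = OC * diagonal (fun _ => z) * OCᵀ := by
    have : (diagonal (fun _ => z) : Matrix n n ℂ) = z • 1 := by
      rw [← diagonal_one]; ext i j; by_cases h : i = j <;> simp [diagonal_apply, h]
    rw [this, Matrix.mul_smul, Matrix.mul_one, Matrix.smul_mul, hOC']
  have hfac : z • (1 : Matrix n n ℂ) - (O * diagonal evv * Oᵀ).map Complex.ofReal =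
      OC * diagonal (fun i => z - (evv i : ℂ)) * OCᵀ := by
    rw [hmap, hone, ← Matrix.sub_mul, ← Matrix.mul_sub, diagonal_sub]
  rw [hfac]
  have : (OC * diagonal (fun i => z - (evv i : ℂ)) * OCᵀ) *
      (OC * diagonal (fun i => (z - (evv i : ℂ))⁻¹) * OCᵀ) =
      OC * (diagonal (fun i => z - (evv i : ℂ)) * diagonal (fun i => (z - (evv i : ℂ))⁻¹)) * OCᵀ := by
    have h1 : OCᵀ * (OC * diagonal (fun i => (z - (evv i : ℂ))⁻¹) * OCᵀ) =
        diagonal (fun i => (z - (evv i : ℂ))⁻¹) * OCᵀ := by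
      rw [← Matrix.mul_assoc, ← Matrix.mul_assoc, hOC, Matrix.one_mul]
    rw [Matrix.mul_assoc (OC * diagonal fun i => z - (evv i : ℂ)), Matrix.mul_assoc OC, h1,
      ← Matrix.mul_assoc, ← Matrix.mul_assoc, Matrix.mul_assoc OC]
  rw [this, diagonal_mul_diagonal]
  have hdg : (diagonal (fun i => (z - (evv i : ℂ)) * (z - (evv i : ℂ))⁻¹) : Matrix n n ℂ) = 1 := by
    have hfun : (fun i => (z - (evv i : ℂ)) * (z - (evv i : ℂ))⁻¹) = fun _ => (1 : ℂ) :=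
      funext fun i => mul_inv_cancel₀ (sub_ne_zero.mpr (hz i))
    rw [hfun, diagonal_one]
  rw [hdg, Matrix.mul_one, hOC']

/-- From a right inverse of `z - XᵀX`, an inverse for `z - XXᵀ` when `z ≠ 0`. -/
lemma second_resolvent {pt rt : Type*} [Fintype pt] [Fintype rt] [DecidableEq pt] [DecidableEq rt]
    (X : Matrix rt pt ℂ) (E : Matrix pt pt ℂ) (z : ℂ) (hz : z ≠ 0)
    (hE : (z • (1 : Matrix pt pt ℂ) - Xᵀ * X) * E = 1) :
    (z • (1 : Matrix rt rt ℂ) - X * Xᵀ) * (z⁻¹ • (1 + X * E * Xᵀ)) = 1 := by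
  have h2 : z • E - Xᵀ * X * E = 1 := by
    rw [← hE, Matrix.sub_mul, Matrix.smul_mul, Matrix.one_mul]
  have hXXE : Xᵀ * X * E = z • E - 1 := by
    rw [eq_sub_iff_add_eq, ← h2]; abel
  have key : X * Xᵀ * (X * E * Xᵀ) = z • (X * E * Xᵀ) - X * Xᵀ := by
    have h3 : X * Xᵀ * (X * E * Xᵀ) = X * (Xᵀ * X * E) * Xᵀ := by
      simp only [Matrix.mul_assoc]
    rw [h3, hXXE, Matrix.mul_sub, Matrix.sub_mul, Matrix.mul_smul, Matrix.smul_mul,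
      Matrix.mul_one]
  have expand : (z • (1 : Matrix rt rt ℂ) - X * Xᵀ) * (1 + X * E * Xᵀ) =
      z • (1 : Matrix rt rt ℂ) := by
    rw [Matrix.sub_mul, Matrix.mul_add, Matrix.mul_add, Matrix.mul_one, Matrix.mul_one, key]
    have h4 : (z • (1 : Matrix rt rt ℂ)) * (X * E * Xᵀ) = z • (X * E * Xᵀ) := by
      rw [Matrix.smul_mul, Matrix.one_mul]
    rw [h4]; abel
  rw [Matrix.mul_smul, expand, smul_smul, inv_mul_cancel₀ hz, one_smul]

end MatrixAux2

section BlockInv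
variable {pt rt : Type*} [Fintype pt] [Fintype rt] [DecidableEq pt] [DecidableEq rt]

lemma lin_factor (X : Matrix rt pt ℂ) (z w : ℂ) :
    w • (Matrix.fromBlocks 0 Xᵀ X 0) - z • (1 : Matrix (pt ⊕ rt) (pt ⊕ rt) ℂ) =
      Matrix.fromBlocks (-(z • 1)) (w • Xᵀ) (w • X) (-(z • 1)) := by
  rw [← fromBlocks_one, Matrix.fromBlocks_smul, Matrix.fromBlocks_smul]
  ext (i | i) (j | j) <;> simp

/-- Explicit inverse for the linearization `w • H - z • 1`. -/
lemma lin_block_inverse (X : Matrix rt pt ℂ) (E : Matrix pt pt ℂ) (F : Matrix rt rt ℂ)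
    (z w : ℂ) (hw : w * w = z) (hw0 : w ≠ 0)
    (hE : (z • (1 : Matrix pt pt ℂ) - Xᵀ * X) * E = 1)
    (hE' : E * (z • (1 : Matrix pt pt ℂ) - Xᵀ * X) = 1)
    (hF : (z • (1 : Matrix rt rt ℂ) - X * Xᵀ) * F = 1) :
    (w • (Matrix.fromBlocks 0 Xᵀ X 0) - z • (1 : Matrix (pt ⊕ rt) (pt ⊕ rt) ℂ)) *
      (-(Matrix.fromBlocks E (w⁻¹ • (E * Xᵀ)) (w⁻¹ • (X * E)) F)) = 1 := by
  have h1 : Xᵀ * (z • (1 : Matrix rt rt ℂ) - X * Xᵀ) =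
      (z • (1 : Matrix pt pt ℂ) - Xᵀ * X) * Xᵀ := by
    rw [Matrix.mul_sub, Matrix.sub_mul, Matrix.mul_smul, Matrix.smul_mul, Matrix.mul_one,
      Matrix.one_mul, Matrix.mul_assoc]
  have hint : E * Xᵀ = Xᵀ * F := by
    calc E * Xᵀ = E * Xᵀ * ((z • (1 : Matrix rt rt ℂ) - X * Xᵀ) * F) := by
          rw [hF, Matrix.mul_one]
      _ = E * ((Xᵀ * (z • (1 : Matrix rt rt ℂ) - X * Xᵀ)) * F) := by
          simp only [Matrix.mul_assoc]
      _ = E * (((z • (1 : Matrix pt pt ℂ) - Xᵀ * X) * Xᵀ) * F) := by rw [h1]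
      _ = (E * (z • (1 : Matrix pt pt ℂ) - Xᵀ * X)) * (Xᵀ * F) := by
          simp only [Matrix.mul_assoc]
      _ = Xᵀ * F := by rw [hE', Matrix.one_mul]
  have hzE : z • E - Xᵀ * X * E = 1 := by
    rw [← hE, Matrix.sub_mul, Matrix.smul_mul, Matrix.one_mul]
  have hzF : z • F - X * Xᵀ * F = 1 := by
    rw [← hF, Matrix.sub_mul, Matrix.smul_mul, Matrix.one_mul]
  have hzw : w⁻¹ * z = w := by rw [← hw, inv_mul_cancel_left₀ hw0]
  rw [lin_factor, Matrix.mul_neg, Matrix.fromBlocks_multiply]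
  have b11 : (-(z • (1 : Matrix pt pt ℂ))) * E + (w • Xᵀ) * (w⁻¹ • (X * E)) =
      -(1 : Matrix pt pt ℂ) := by
    have e1 : (-(z • (1 : Matrix pt pt ℂ))) * E = -(z • E) := by
      rw [Matrix.neg_mul, Matrix.smul_mul, Matrix.one_mul]
    have e2 : (w • Xᵀ) * (w⁻¹ • (X * E)) = Xᵀ * X * E := by
      rw [Matrix.smul_mul, Matrix.mul_smul, smul_smul, mul_inv_cancel₀ hw0, one_smul,
        Matrix.mul_assoc]
    rw [e1, e2, ← hzE]; abel
  have b12 : (-(z • (1 : Matrix pt pt ℂ))) * (w⁻¹ • (E * Xᵀ)) + (w • Xᵀ) * F =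
      (0 : Matrix pt rt ℂ) := by
    have e1 : (-(z • (1 : Matrix pt pt ℂ))) * (w⁻¹ • (E * Xᵀ)) = -(w • (E * Xᵀ)) := by
      rw [Matrix.neg_mul, Matrix.mul_smul, Matrix.smul_mul, Matrix.one_mul, smul_smul, hzw]
    have e3 : (w • Xᵀ) * F = w • (Xᵀ * F) := by rw [Matrix.smul_mul]
    rw [e1, e3, hint]; abel
  have b21 : (w • X) * E + (-(z • (1 : Matrix rt rt ℂ))) * (w⁻¹ • (X * E)) =
      (0 : Matrix rt pt ℂ) := by
    have e1 : (-(z • (1 : Matrix rt rt ℂ))) * (w⁻¹ • (X * E)) = -(w • (X * E)) := by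
      rw [Matrix.neg_mul, Matrix.mul_smul, Matrix.smul_mul, Matrix.one_mul, smul_smul, hzw]
    have e3 : (w • X) * E = w • (X * E) := by rw [Matrix.smul_mul]
    rw [e1, e3]; abel
  have b22 : (w • X) * (w⁻¹ • (E * Xᵀ)) + (-(z • (1 : Matrix rt rt ℂ))) * F =
      -(1 : Matrix rt rt ℂ) := by
    have e1 : (w • X) * (w⁻¹ • (E * Xᵀ)) = X * Xᵀ * F := by
      rw [Matrix.smul_mul, Matrix.mul_smul, smul_smul, mul_inv_cancel₀ hw0, one_smul,
        ← Matrix.mul_assoc, Matrix.mul_assoc X E, hint, ← Matrix.mul_assoc]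
    have e2 : (-(z • (1 : Matrix rt rt ℂ))) * F = -(z • F) := by
      rw [Matrix.neg_mul, Matrix.smul_mul, Matrix.one_mul]
    rw [e1, e2, ← hzF]; abel
  rw [b11, b12, b21, b22]
  have : Matrix.fromBlocks (-(1 : Matrix pt pt ℂ)) 0 0 (-(1 : Matrix rt rt ℂ)) =
      -(1 : Matrix (pt ⊕ rt) (pt ⊕ rt) ℂ) := by
    ext (i | i) (j | j) <;> simp [Matrix.one_apply]
  rw [this, neg_neg]
end BlockInv

section Analytic

/-- If the circle avoids the ray `(-∞, 0]`, so does the whole closed disk. -/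
lemma closedBall_subset_slitPlane {c : ℂ} {R : ℝ} (hR : 0 < R)
    (hΓ : ∀ z ∈ sphere c R, ¬(z.im = 0 ∧ z.re ≤ 0)) :
    ∀ z ∈ closedBall c R, z ∈ Complex.slitPlane := by
  intro z hz
  by_contra hns
  rw [Complex.mem_slitPlane_iff] at hns
  push_neg at hns
  obtain ⟨hre, him⟩ : z.re ≤ 0 ∧ z.im = 0 := ⟨hns.1, hns.2⟩
  set T : ℝ := dist z c + R + 1 with hT
  have hT0 : (0:ℝ) ≤ T := by positivity
  have hcont : Continuous fun t : ℝ => dist (z - (t:ℂ)) c :=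
    (continuous_const.sub Complex.continuous_ofReal).dist continuous_const
  have h0 : dist (z - ((0:ℝ):ℂ)) c ≤ R := by simpa using (mem_closedBall.mp hz)
  have hTbig : R ≤ dist (z - (T:ℂ)) c := by
    have h1 : dist (z - (T:ℂ)) z ≤ dist (z - (T:ℂ)) c + dist c z := dist_triangle _ _ _
    have h2 : dist (z - (T:ℂ)) z = T := by
      rw [Complex.dist_eq]
      simp [hT0, abs_of_nonneg]
    have := dist_comm z c
    nlinarith [dist_nonneg (x := z - (T:ℂ)) (y := c)]
  have : R ∈ Set.Icc (dist (z - ((0:ℝ):ℂ)) c) (dist (z - (T:ℂ)) c) := ⟨h0, hTbig⟩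
  obtain ⟨t, ht, hgt⟩ := intermediate_value_Icc hT0 hcont.continuousOn this
  refine hΓ (z - (t:ℂ)) (mem_sphere.mpr hgt) ⟨by simp [him], ?_⟩
  simp only [Complex.sub_re, Complex.ofReal_re]
  linarith [ht.1]

/-- Cauchy formula for `z^{1/2}` against a simple pole inside the disk. -/
lemma integral_sqrt_pole {c : ℂ} {R : ℝ} (hR : 0 < R)
    (hslit : ∀ z ∈ closedBall c R, z ∈ Complex.slitPlane)
    (lam : ℂ) (hlam : lam ∈ ball c R) :
    (∮ z in C(c, R), (z - lam)⁻¹ * z ^ (1/2:ℂ)) =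
      (2 * Real.pi * Complex.I) * lam ^ (1/2:ℂ) := by
  have hdOn : DifferentiableOn ℂ (fun z => z ^ (1/2:ℂ)) (closedBall c R) := fun z hz =>
    (differentiableAt_id.cpow (differentiableAt_const _) (hslit z hz)).differentiableWithinAt
  have hdc : DiffContOnCl ℂ (fun z => z ^ (1/2:ℂ)) (ball c R) :=
    ⟨hdOn.mono ball_subset_closedBall, by
      rw [closure_ball c hR.ne']; exact hdOn.continuousOn⟩
  have := hdc.circleIntegral_sub_inv_smul hlam
  simpa [smul_eq_mul] using this

/-- Cauchy–Goursat: vanishing of the integral when the pole is outside the disk. -/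
lemma integral_sqrt_pole_out {c : ℂ} {R : ℝ} (hR : 0 < R)
    (hslit : ∀ z ∈ closedBall c R, z ∈ Complex.slitPlane)
    (mu : ℂ) (hmu : mu ∉ closedBall c R) :
    (∮ z in C(c, R), (z - mu)⁻¹ * z ^ (1/2:ℂ)) = 0 := by
  apply Complex.circleIntegral_eq_zero_of_differentiable_on_off_countable hR.le
    Set.countable_empty
  · intro z hz
    have hzs := hslit z hz
    have hzne : z ≠ mu := fun h => hmu (h ▸ hz)
    exact (((continuousAt_id.sub continuousAt_const).inv₀
      (sub_ne_zero.mpr hzne)).mul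
        ((differentiableAt_id.cpow (differentiableAt_const _) hzs).continuousAt)).continuousWithinAt
  · intro z hz
    have hzball : z ∈ ball c R := hz.1
    have hzs := hslit z (ball_subset_closedBall hzball)
    have hzne : z ≠ mu := fun h => hmu (h ▸ ball_subset_closedBall hzball)
    exact ((differentiableAt_id.sub_const mu).inv (sub_ne_zero.mpr hzne)).mul
      (differentiableAt_id.cpow (differentiableAt_const _) hzs)

/-- Linearity of the circle integral over finite sums. -/
lemma circleIntegral_finset_sum {ι : Type*} (s : Finset ι) (f : ι → ℂ → ℂ) {c : ℂ} {R : ℝ}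
    (hf : ∀ i ∈ s, CircleIntegrable (f i) c R) :
    (∮ z in C(c, R), (∑ i ∈ s, f i z)) = ∑ i ∈ s, ∮ z in C(c, R), f i z := by
  simp only [circleIntegral]
  rw [← intervalIntegral.integral_finset_sum (fun i hi => (hf i hi).out)]
  congr 1
  funext θ
  rw [Finset.smul_sum]

end Analytic

section DotLemmas
variable {n p k : Type*} [Fintype n] [Fintype p] [Fintype k] [DecidableEq n] [DecidableEq p]
  [DecidableEq k]

lemma dot_single (P : Matrix n n ℂ) (j : n) :
    (fun s => if s = j then (1:ℂ) else 0) ⬝ᵥ (P *ᵥ (fun s => if s = j then (1:ℂ) else 0)) =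
      P j j := by
  have he : (fun s => if s = j then (1:ℂ) else 0) = Pi.single j 1 := by
    funext s; simp [Pi.single_apply]
  rw [he, Matrix.mulVec_single, single_dotProduct]
  simp

lemma entry_quad (Uc : Matrix p k ℂ) (Ey : Matrix p p ℂ) (j : k) :
    (Ucᵀ * Ey * Uc) j j = (fun a => Uc a j) ⬝ᵥ (Ey *ᵥ (fun a => Uc a j)) := by
  simp only [Matrix.mul_apply, Matrix.mulVec, dotProduct, Matrix.transpose_apply,
    Finset.sum_mul, Finset.mul_sum]
  rw [Finset.sum_comm]
  apply Finset.sum_congr rfl; intro a _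
  apply Finset.sum_congr rfl; intro b _
  ring

lemma dot_spectral (O : Matrix n n ℝ) (u : n → ℝ) (f : n → ℂ) :
    ((fun a => (u a : ℂ)) ⬝ᵥ
      ((O.map Complex.ofReal * diagonal f * (O.map Complex.ofReal)ᵀ) *ᵥ (fun a => (u a : ℂ)))) =
      ∑ i, f i * (((u ⬝ᵥ fun a => O a i : ℝ)) : ℂ)^2 := by
  set OC := O.map Complex.ofReal with hOC
  set uC : n → ℂ := fun a => (u a : ℂ) with huC
  set x : n → ℂ := OCᵀ *ᵥ uC with hxdef
  have h1 : (OC * diagonal f * OCᵀ) *ᵥ uC = OC *ᵥ (diagonal f *ᵥ x) := by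
    rw [hxdef, Matrix.mulVec_mulVec, Matrix.mulVec_mulVec, Matrix.mul_assoc]
  have h2 : uC ⬝ᵥ (OC *ᵥ (diagonal f *ᵥ x)) = x ⬝ᵥ (diagonal f *ᵥ x) := by
    rw [dotProduct_mulVec, hxdef, Matrix.mulVec_transpose]
  have hx : ∀ i, x i = (((u ⬝ᵥ fun a => O a i : ℝ)) : ℂ) := by
    intro i
    simp only [hxdef, Matrix.mulVec, dotProduct, Matrix.transpose_apply, hOC,
      Matrix.map_apply, huC]
    push_cast
    exact Finset.sum_congr rfl fun a _ => mul_comm _ _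
  rw [h1, h2]
  simp only [dotProduct, Matrix.mulVec_diagonal]
  apply Finset.sum_congr rfl; intro i _
  rw [hx i]
  rw [show (u ⬝ᵥ fun a => O a i) = ∑ a, u a * O a i from rfl]
  ring

end DotLemmas

end

/-- **Angle master equation.** Let `Ỹ = X̃ + V D Uᵀ` and let `λ̃ > 0` be a simple
eigenvalue of `ỸᵀỸ` with unit eigenvector `ξ̃`. If `Γ` is a positively oriented circle
in `ℂ ∖ (−∞, 0]` enclosing `λ̃` and no other eigenvalue of `ỸᵀỸ`, with no eigenvalue of
`X̃ᵀX̃` inside or on `Γ`, and the master matrix invertible on `Γ`, then for each `j`,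
`|⟨u_j, ξ̃⟩|² = (2πi λ̃^{1/2})⁻¹ ∮_Γ e_jᵀ 𝒟⁻¹ (𝒟⁻¹ + z^{1/2} Aᵀ G(z) A)⁻¹ 𝒟⁻¹ e_j dz`. -/

theorem angle_master_equation
    {p r k : ℕ}
    (Xt : Matrix (Fin r) (Fin p) ℝ)
    (U : Matrix (Fin p) (Fin k) ℝ) (V : Matrix (Fin r) (Fin k) ℝ)
    (d : Fin k → ℝ) (hd : ∀ i, d i ≠ 0)
    -- λ̃ is a simple eigenvalue of ỸᵀỸ with unit eigenvector ξ̃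
    (lam : ℝ) (hlam_pos : 0 < lam)
    (xi : Fin p → ℝ)
    (hxi_unit : xi ⬝ᵥ xi = 1)
    (hxi_eig :
      ((Xt + V * Matrix.diagonal d * Uᵀ)ᵀ *
        (Xt + V * Matrix.diagonal d * Uᵀ)).mulVec xi = lam • xi)
    (hlam_simple : ∀ v : Fin p → ℝ,
      ((Xt + V * Matrix.diagonal d * Uᵀ)ᵀ *
        (Xt + V * Matrix.diagonal d * Uᵀ)).mulVec v = lam • v →
      ∃ t : ℝ, v = t • xi)
    -- the contour: a positively oriented circle avoiding (−∞, 0]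
    (c : ℂ) (R : ℝ) (hR : 0 < R)
    (hΓ_avoid : ∀ z ∈ sphere c R, ¬(z.im = 0 ∧ z.re ≤ 0))
    -- λ̃ is the only eigenvalue of ỸᵀỸ inside Γ
    (hlam_in : (lam : ℂ) ∈ ball c R)
    (honly : ∀ μ ∈ spectrum ℝ
        ((Xt + V * Matrix.diagonal d * Uᵀ)ᵀ * (Xt + V * Matrix.diagonal d * Uᵀ)),
      (μ : ℂ) ∈ ball c R → μ = lam)
    -- no eigenvalue of X̃ᵀX̃ lies inside or on Γ
    (hX_out : ∀ μ ∈ spectrum ℝ (Xtᵀ * Xt), (μ : ℂ) ∉ closedBall c R)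
    -- the master matrix is invertible on Γ
    (hM_inv : ∀ z ∈ sphere c R, IsUnit (masterM Xt U V d z)) :
    ∀ j : Fin k,
      (((fun i => U i j) ⬝ᵥ xi : ℝ) : ℂ) ^ 2 =
        (2 * Real.pi * Complex.I * (Real.sqrt lam : ℂ))⁻¹ *
          circleIntegral
            (fun z =>
              (fun s : Fin k ⊕ Fin k => if s = Sum.inl j then (1 : ℂ) else 0) ⬝ᵥ
                ((dBlockC d)⁻¹ * (masterM Xt U V d z)⁻¹ * (dBlockC d)⁻¹).mulVec
                  (fun s : Fin k ⊕ Fin k => if s = Sum.inl j then (1 : ℂ) else 0))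
            c R := by
  intro j
  classical
  set Y : Matrix (Fin r) (Fin p) ℝ := Xt + V * Matrix.diagonal d * Uᵀ with hYdef
  have hN : (Yᵀ * Y).IsHermitian := by
    have h := Matrix.isHermitian_conjTranspose_mul_self Y
    rwa [Matrix.conjTranspose_eq_transpose_of_trivial] at h
  have hX : (Xtᵀ * Xt).IsHermitian := by
    have h := Matrix.isHermitian_conjTranspose_mul_self Xt
    rwa [Matrix.conjTranspose_eq_transpose_of_trivial] at h
  set ON : Matrix (Fin p) (Fin p) ℝ := (hN.eigenvectorUnitary : Matrix (Fin p) (Fin p) ℝ)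
    with hONdef
  set evN : Fin p → ℝ := hN.eigenvalues with hevN
  set OX : Matrix (Fin p) (Fin p) ℝ := (hX.eigenvectorUnitary : Matrix (Fin p) (Fin p) ℝ)
    with hOXdef
  set evX : Fin p → ℝ := hX.eigenvalues with hevX
  have hON : ONᵀ * ON = 1 := by
    have h := Matrix.mem_unitaryGroup_iff'.mp (hN.eigenvectorUnitary).2
    rwa [Matrix.star_eq_conjTranspose, Matrix.conjTranspose_eq_transpose_of_trivial] at h
  have hOX : OXᵀ * OX = 1 := by
    have h := Matrix.mem_unitaryGroup_iff'.mp (hX.eigenvectorUnitary).2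
    rwa [Matrix.star_eq_conjTranspose, Matrix.conjTranspose_eq_transpose_of_trivial] at h
  have hNdec : Yᵀ * Y = ON * Matrix.diagonal evN * ONᵀ := by
    have h := hN.spectral_theorem
    rw [Unitary.conjStarAlgAut_apply, Matrix.star_eq_conjTranspose, Matrix.conjTranspose_eq_transpose_of_trivial] at h
    simpa using h
  have hXdec : Xtᵀ * Xt = OX * Matrix.diagonal evX * OXᵀ := by
    have h := hX.spectral_theorem
    rw [Unitary.conjStarAlgAut_apply, Matrix.star_eq_conjTranspose, Matrix.conjTranspose_eq_transpose_of_trivial] at h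
    simpa using h
  set XC := Xt.map Complex.ofReal with hXC
  set YC := Y.map Complex.ofReal with hYC
  set UC := U.map Complex.ofReal with hUC
  set VC := V.map Complex.ofReal with hVC
  set uR : Fin p → ℝ := fun a => U a j with huR
  have hONentry : ∀ i i' : Fin p,
      ((fun a => ON a i) ⬝ᵥ (fun a => ON a i')) = if i = i' then (1:ℝ) else 0 := by
    intro i i'
    have h : (ONᵀ * ON) i i' = (1 : Matrix (Fin p) (Fin p) ℝ) i i' := by rw [hON]
    rw [Matrix.mul_apply, Matrix.one_apply] at h
    simpa [dotProduct, Matrix.transpose_apply] using h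
  have hNO : (Yᵀ * Y) * ON = ON * Matrix.diagonal evN := by
    rw [hNdec, Matrix.mul_assoc, hON, Matrix.mul_one]
  have hcolN : ∀ i, (Yᵀ * Y) *ᵥ (fun a => ON a i) = evN i • (fun a => ON a i) := by
    intro i
    funext a
    have h1 : ((Yᵀ * Y) *ᵥ (fun b => ON b i)) a = ((Yᵀ * Y) * ON) a i := by
      simp [Matrix.mulVec, Matrix.mul_apply, dotProduct]
    rw [h1, hNO, Matrix.mul_diagonal]
    simp [mul_comm]
  have hNspec : ∀ i, evN i ∈ spectrum ℝ (Yᵀ * Y) := fun i => hN.eigenvalues_mem_spectrum_real i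
  have hXspec : ∀ i, evX i ∈ spectrum ℝ (Xtᵀ * Xt) := fun i => hX.eigenvalues_mem_spectrum_real i
  have hslit : ∀ z ∈ closedBall c R, z ∈ Complex.slitPlane :=
    closedBall_subset_slitPlane hR hΓ_avoid
  have hzX : ∀ z ∈ closedBall c R, ∀ i, z ≠ (evX i : ℂ) := by
    intro z hz i he
    exact hX_out (evX i) (hXspec i) (he ▸ hz)
  -- D-block facts
  have hdC : ∀ i : Fin k, (d i : ℂ) ≠ 0 := fun i => Complex.ofReal_ne_zero.mpr (hd i)
  set DC : Matrix (Fin k) (Fin k) ℂ := Matrix.diagonal (fun i => (d i : ℂ)) with hDC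
  set DCi : Matrix (Fin k) (Fin k) ℂ := Matrix.diagonal (fun i => (d i : ℂ)⁻¹) with hDCi
  set Dm : Matrix (Fin k ⊕ Fin k) (Fin k ⊕ Fin k) ℂ := Matrix.fromBlocks 0 DC DC 0 with hDm
  set Dinv : Matrix (Fin k ⊕ Fin k) (Fin k ⊕ Fin k) ℂ := Matrix.fromBlocks 0 DCi DCi 0 with hDinv
  have h0map : ∀ {a b : ℕ}, (0 : Matrix (Fin a) (Fin b) ℝ).map Complex.ofReal =
      (0 : Matrix (Fin a) (Fin b) ℂ) := by
    intro a b; ext i j'; simp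
  have hDmEq : dBlockC d = Dm := by
    rw [dBlockC, Matrix.fromBlocks_map, cmap_diagonal, h0map, hDm, hDC]
  have hDD : Dm * Dinv = 1 := by
    rw [hDm, hDinv, Matrix.fromBlocks_multiply]
    simp only [Matrix.zero_mul, Matrix.mul_zero, add_zero, zero_add]
    rw [hDC, hDCi, diagonal_mul_diagonal]
    have h1 : (fun i => (d i : ℂ) * (d i : ℂ)⁻¹) = fun _ => (1:ℂ) :=
      funext fun i => mul_inv_cancel₀ (hdC i)
    rw [h1, diagonal_one, fromBlocks_one]
  have hDD' : Dinv * Dm = 1 := mul_eq_one_comm.mp hDD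
  have hDinvEq : (dBlockC d)⁻¹ = Dinv := by
    rw [hDmEq]; exact Matrix.inv_eq_right_inv hDD
  have hACeq : aBlockC U V = Matrix.fromBlocks UC 0 0 VC := by
    rw [aBlockC, Matrix.fromBlocks_map, h0map, h0map, hUC, hVC]
  have hYCsum : YC = XC + VC * DC * UCᵀ := by
    rw [hYC, hYdef, cmap_add, cmap_mul, cmap_mul, cmap_diagonal, cmap_transpose, ← hXC, ← hUC,
      ← hVC, ← hDC]
  have hYCT : YCᵀ = XCᵀ + UC * DC * VCᵀ := by
    rw [hYCsum, Matrix.transpose_add, Matrix.transpose_mul, Matrix.transpose_mul,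
      Matrix.transpose_transpose, hDC, Matrix.diagonal_transpose, ← hDC, Matrix.mul_assoc]
  have hADA : aBlockC U V * Dm * (aBlockC U V)ᵀ =
      Matrix.fromBlocks 0 (UC * DC * VCᵀ) (VC * DC * UCᵀ) 0 := by
    rw [hACeq, hDm, Matrix.fromBlocks_transpose, Matrix.fromBlocks_multiply,
      Matrix.fromBlocks_multiply]
    simp [Matrix.mul_assoc]
  have hNmapC : (Yᵀ * Y).map Complex.ofReal = YCᵀ * YC := by
    rw [cmap_mul, cmap_transpose, ← hYC]
  set cfun : Fin p → ℂ :=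
    fun i => (((uR ⬝ᵥ (fun a => ON a i)) : ℝ) : ℂ) ^ 2 with hcfun
  -- ================= pointwise identity on the circle =================
  have main : ∀ z ∈ sphere c R, (∀ i, z ≠ (evN i : ℂ)) ∧
      ((fun s : Fin k ⊕ Fin k => if s = Sum.inl j then (1 : ℂ) else 0) ⬝ᵥ
        ((dBlockC d)⁻¹ * (masterM Xt U V d z)⁻¹ * (dBlockC d)⁻¹).mulVec
          (fun s : Fin k ⊕ Fin k => if s = Sum.inl j then (1 : ℂ) else 0)) =
        ∑ i, cfun i * ((z - (evN i : ℂ))⁻¹ * z ^ (1/2 : ℂ)) := by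
    intro z hzs
    have hzcb : z ∈ closedBall c R := sphere_subset_closedBall hzs
    have hz0 : z ≠ 0 := Complex.slitPlane_ne_zero (hslit z hzcb)
    have hww : z ^ (1/2:ℂ) * z ^ (1/2:ℂ) = z := by
      rw [← Complex.cpow_add _ _ hz0]; norm_num
    have hw0 : z ^ (1/2:ℂ) ≠ 0 := by
      simp [Complex.cpow_def_of_ne_zero hz0, Complex.exp_ne_zero]
    -- X resolvents
    set Ex := OX.map Complex.ofReal * Matrix.diagonal (fun i => (z - (evX i : ℂ))⁻¹) *
      (OX.map Complex.ofReal)ᵀ with hExdef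
    have hEx : (z • (1 : Matrix (Fin p) (Fin p) ℂ) - XCᵀ * XC) * Ex = 1 := by
      have h := spectral_resolvent OX evX hOX z (hzX z hzcb)
      rw [← hXdec, cmap_mul, cmap_transpose, ← hXC] at h
      exact h
    have hEx' : Ex * (z • (1 : Matrix (Fin p) (Fin p) ℂ) - XCᵀ * XC) = 1 :=
      mul_eq_one_comm.mp hEx
    set Fx := z⁻¹ • (1 + XC * Ex * XCᵀ) with hFxdef
    have hFx : (z • (1 : Matrix (Fin r) (Fin r) ℂ) - XC * XCᵀ) * Fx = 1 :=
      second_resolvent XC Ex z hz0 hEx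
    set B := z ^ (1/2:ℂ) • Matrix.fromBlocks 0 XCᵀ XC 0 -
      z • (1 : Matrix (Fin p ⊕ Fin r) (Fin p ⊕ Fin r) ℂ) with hBdef
    set Binv := -(Matrix.fromBlocks Ex ((z ^ (1/2:ℂ))⁻¹ • (Ex * XCᵀ))
      ((z ^ (1/2:ℂ))⁻¹ • (XC * Ex)) Fx) with hBinvdef
    have hB : B * Binv = 1 := by
      rw [hBdef, hBinvdef]
      exact lin_block_inverse XC Ex Fx z (z ^ (1/2:ℂ)) hww hw0 hEx hEx' hFx
    have hlinG : linG (Xt.map Complex.ofReal) z = Binv := by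
      rw [show Xt.map Complex.ofReal = XC from rfl]
      rw [linG]
      rw [show (1/2 : ℂ) = (1/2 : ℂ) from rfl]
      exact Matrix.inv_eq_right_inv hB
    -- master matrix facts
    have hMdef : masterM Xt U V d z =
        Dinv + z ^ (1/2:ℂ) • ((aBlockC U V)ᵀ * Binv * aBlockC U V) := by
      rw [masterM, hDinvEq, hlinG]
    have hu : IsUnit (masterM Xt U V d z) := hM_inv z hzs
    have hdet : IsUnit (masterM Xt U V d z).det := (Matrix.isUnit_iff_isUnit_det _).mp hu
    have hMu : masterM Xt U V d z * (masterM Xt U V d z)⁻¹ = 1 := Matrix.mul_nonsing_inv _ hdet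
    have hMu' : (masterM Xt U V d z)⁻¹ * masterM Xt U V d z = 1 := Matrix.nonsing_inv_mul _ hdet
    set W := Binv - z ^ (1/2:ℂ) •
      (Binv * aBlockC U V * (masterM Xt U V d z)⁻¹ * (aBlockC U V)ᵀ * Binv) with hWdef
    -- BY and its Woodbury inverse
    have hBYsplit : z ^ (1/2:ℂ) • Matrix.fromBlocks 0 YCᵀ YC 0 -
        z • (1 : Matrix (Fin p ⊕ Fin r) (Fin p ⊕ Fin r) ℂ) =
        B + z ^ (1/2:ℂ) • (aBlockC U V * Dm * (aBlockC U V)ᵀ) := by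
      rw [hADA, hBdef]
      have hHY : Matrix.fromBlocks 0 YCᵀ YC 0 = Matrix.fromBlocks 0 XCᵀ XC 0 +
          Matrix.fromBlocks 0 (UC * DC * VCᵀ) (VC * DC * UCᵀ) 0 := by
        rw [Matrix.fromBlocks_add, hYCT, hYCsum]
        congr 1 <;> simp
      rw [hHY, smul_add, add_sub_right_comm]
    have hBYW : (z ^ (1/2:ℂ) • Matrix.fromBlocks 0 YCᵀ YC 0 -
        z • (1 : Matrix (Fin p ⊕ Fin r) (Fin p ⊕ Fin r) ℂ)) * W = 1 := by
      rw [hBYsplit, hWdef]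
      exact woodbury_inv B Binv (aBlockC U V) Dm Dinv (masterM Xt U V d z)
        (masterM Xt U V d z)⁻¹ (z ^ (1/2:ℂ)) hB hDD hMdef hMu
    have hWBY : W * (z ^ (1/2:ℂ) • Matrix.fromBlocks 0 YCᵀ YC 0 -
        z • (1 : Matrix (Fin p ⊕ Fin r) (Fin p ⊕ Fin r) ℂ)) = 1 :=
      mul_eq_one_comm.mp hBYW
    -- z is not an eigenvalue of YᵀY
    have hzNi : ∀ i, z ≠ (evN i : ℂ) := by
      intro i he
      set oC : Fin p → ℂ := fun a => ((ON a i : ℝ) : ℂ) with hoC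
      have hcolC : (YCᵀ * YC) *ᵥ oC = z • oC := by
        rw [← hNmapC, hoC, cmap_mulVec, hcolN i]
        funext a
        simp [he]
      set vv : (Fin p ⊕ Fin r) → ℂ :=
        Sum.elim (z ^ (1/2:ℂ) • oC) (YC *ᵥ oC) with hvv
      have hBYvv : (z ^ (1/2:ℂ) • Matrix.fromBlocks 0 YCᵀ YC 0 -
          z • (1 : Matrix (Fin p ⊕ Fin r) (Fin p ⊕ Fin r) ℂ)) *ᵥ vv = 0 := by
        rw [Matrix.sub_mulVec, Matrix.smul_mulVec, Matrix.smul_mulVec,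
          Matrix.one_mulVec, hvv, Matrix.fromBlocks_mulVec]
        funext s
        rcases s with a | a
        · simp only [Sum.elim_comp_inl, Sum.elim_comp_inr, Matrix.zero_mulVec, zero_add,
            add_zero, Pi.sub_apply, Pi.smul_apply, Sum.elim_inl, smul_eq_mul, Pi.zero_apply]
          rw [Matrix.mulVec_mulVec, hcolC]
          simp only [Pi.smul_apply, smul_eq_mul]
          ring
        · simp only [Sum.elim_comp_inl, Sum.elim_comp_inr, Matrix.zero_mulVec, zero_add,
            add_zero, Pi.sub_apply, Pi.smul_apply, Sum.elim_inr, smul_eq_mul, Pi.zero_apply]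
          rw [Matrix.mulVec_smul]
          simp only [Pi.smul_apply, smul_eq_mul]
          rw [← mul_assoc, hww]
          ring
      have hvv0 : vv = 0 := by
        calc vv = (1 : Matrix (Fin p ⊕ Fin r) (Fin p ⊕ Fin r) ℂ) *ᵥ vv :=
              (Matrix.one_mulVec vv).symm
          _ = (W * (z ^ (1/2:ℂ) • Matrix.fromBlocks 0 YCᵀ YC 0 -
              z • (1 : Matrix (Fin p ⊕ Fin r) (Fin p ⊕ Fin r) ℂ))) *ᵥ vv := by rw [hWBY]
          _ = W *ᵥ ((z ^ (1/2:ℂ) • Matrix.fromBlocks 0 YCᵀ YC 0 -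
              z • (1 : Matrix (Fin p ⊕ Fin r) (Fin p ⊕ Fin r) ℂ)) *ᵥ vv) := by
              rw [Matrix.mulVec_mulVec]
          _ = 0 := by rw [hBYvv, Matrix.mulVec_zero]
      have hON0 : ∀ a, ON a i = 0 := by
        intro a
        have h1 : vv (Sum.inl a) = 0 := by rw [hvv0]; rfl
        rw [hvv] at h1
        simp only [Sum.elim_inl, Pi.smul_apply, smul_eq_mul, hoC] at h1
        rcases mul_eq_zero.mp h1 with h | h
        · exact absurd h hw0
        · exact_mod_cast h
      have h1 : ((fun a => ON a i) ⬝ᵥ (fun a => ON a i)) = (1:ℝ) := by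
        rw [hONentry i i]; simp
      rw [show (fun a => ON a i) = fun _ => (0:ℝ) from funext hON0] at h1
      simp [dotProduct] at h1
    -- Y resolvents
    set Ey := ON.map Complex.ofReal * Matrix.diagonal (fun i => (z - (evN i : ℂ))⁻¹) *
      (ON.map Complex.ofReal)ᵀ with hEydef
    have hEy : (z • (1 : Matrix (Fin p) (Fin p) ℂ) - YCᵀ * YC) * Ey = 1 := by
      have h := spectral_resolvent ON evN hON z hzNi
      rw [← hNdec, hNmapC] at h
      exact h
    have hEy' : Ey * (z • (1 : Matrix (Fin p) (Fin p) ℂ) - YCᵀ * YC) = 1 :=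
      mul_eq_one_comm.mp hEy
    set Fy := z⁻¹ • (1 + YC * Ey * YCᵀ) with hFydef
    have hFy : (z • (1 : Matrix (Fin r) (Fin r) ℂ) - YC * YCᵀ) * Fy = 1 :=
      second_resolvent YC Ey z hz0 hEy
    set Wy := -(Matrix.fromBlocks Ey ((z ^ (1/2:ℂ))⁻¹ • (Ey * YCᵀ))
      ((z ^ (1/2:ℂ))⁻¹ • (YC * Ey)) Fy) with hWydef
    have hBYWy : (z ^ (1/2:ℂ) • Matrix.fromBlocks 0 YCᵀ YC 0 -
        z • (1 : Matrix (Fin p ⊕ Fin r) (Fin p ⊕ Fin r) ℂ)) * Wy = 1 := by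
      rw [hWydef]
      exact lin_block_inverse YC Ey Fy z (z ^ (1/2:ℂ)) hww hw0 hEy hEy' hFy
    have hWWy : W = Wy := by
      calc W = W * ((z ^ (1/2:ℂ) • Matrix.fromBlocks 0 YCᵀ YC 0 -
            z • (1 : Matrix (Fin p ⊕ Fin r) (Fin p ⊕ Fin r) ℂ)) * Wy) := by
            rw [hBYWy, Matrix.mul_one]
        _ = (W * (z ^ (1/2:ℂ) • Matrix.fromBlocks 0 YCᵀ YC 0 -
            z • (1 : Matrix (Fin p ⊕ Fin r) (Fin p ⊕ Fin r) ℂ))) * Wy := by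
            rw [Matrix.mul_assoc]
        _ = Wy := by rw [hWBY, Matrix.one_mul]
    have hmaster : Dinv * (masterM Xt U V d z)⁻¹ * Dinv =
        Dinv - z ^ (1/2:ℂ) • ((aBlockC U V)ᵀ * Wy * aBlockC U V) := by
      rw [← hWWy, hWdef]
      exact woodbury_master B Binv (aBlockC U V) Dm Dinv (masterM Xt U V d z)
        (masterM Xt U V d z)⁻¹ (z ^ (1/2:ℂ)) hDD' hMdef hMu hMu'
    -- entry computation
    have hentry : ((aBlockC U V)ᵀ * Wy * aBlockC U V) (Sum.inl j) (Sum.inl j) =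
        -((fun a => ((uR a : ℝ) : ℂ)) ⬝ᵥ (Ey *ᵥ (fun a => ((uR a : ℝ) : ℂ)))) := by
      rw [hACeq, hWydef, Matrix.fromBlocks_transpose, Matrix.mul_neg, Matrix.neg_mul,
        Matrix.neg_apply, Matrix.transpose_zero, Matrix.fromBlocks_multiply,
        Matrix.fromBlocks_multiply, Matrix.fromBlocks_apply₁₁]
      congr 1
      simp only [Matrix.zero_mul, Matrix.mul_zero, add_zero, zero_add]
      rw [entry_quad UC Ey j]
      rfl
    constructor
    · exact hzNi
    -- final formula
    rw [dot_single, hDinvEq]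
    rw [hmaster]
    rw [Matrix.sub_apply, Matrix.smul_apply, hentry]
    have hD0 : Dinv (Sum.inl j) (Sum.inl j) = 0 := by
      rw [hDinv, Matrix.fromBlocks_apply₁₁]
      simp
    rw [hD0]
    rw [hEydef, dot_spectral ON uR (fun i => (z - (evN i : ℂ))⁻¹)]
    rw [zero_sub, smul_neg, neg_neg, smul_eq_mul, Finset.mul_sum]
    apply Finset.sum_congr rfl
    intro i _
    simp only [hcfun]
    ring
  -- ================= eigenvalue bookkeeping =================
  have hsph_ne : ∀ i, (evN i : ℂ) ∉ sphere c R := fun i hmem => (main _ hmem).1 i rfl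
  have hout : ∀ i, evN i ≠ lam → (evN i : ℂ) ∉ closedBall c R := by
    intro i hne hmem
    rcases lt_or_eq_of_le (mem_closedBall.mp hmem) with hlt | heq
    · exact hne (honly (evN i) (hNspec i) (mem_ball.mpr hlt))
    · exact hsph_ne i (mem_sphere.mpr heq)
  -- existence of the eigenvalue index
  have hex : ∃ i, evN i = lam := by
    by_contra hne
    push_neg at hne
    have hnec : ∀ i, (lam : ℂ) ≠ (evN i : ℂ) := by
      intro i he
      exact hne i (Complex.ofReal_inj.mp he).symm
    have hEN := spectral_resolvent ON evN hON (lam : ℂ) hnec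
    rw [← hNdec, hNmapC] at hEN
    have hEN' := mul_eq_one_comm.mp hEN
    set xiC : Fin p → ℂ := fun a => ((xi a : ℝ) : ℂ) with hxiC
    have hker : ((lam : ℂ) • (1 : Matrix (Fin p) (Fin p) ℂ) - YCᵀ * YC) *ᵥ xiC = 0 := by
      rw [Matrix.sub_mulVec, Matrix.smul_mulVec, Matrix.one_mulVec, ← hNmapC, hxiC,
        cmap_mulVec, hxi_eig]
      funext a
      simp
    have hxiC0 : xiC = 0 := by
      calc xiC = (1 : Matrix (Fin p) (Fin p) ℂ) *ᵥ xiC := (Matrix.one_mulVec xiC).symm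
        _ = ((ON.map Complex.ofReal * Matrix.diagonal (fun i => ((lam:ℂ) - (evN i : ℂ))⁻¹) *
            (ON.map Complex.ofReal)ᵀ) *
            ((lam : ℂ) • (1 : Matrix (Fin p) (Fin p) ℂ) - YCᵀ * YC)) *ᵥ xiC := by rw [hEN']
        _ = (ON.map Complex.ofReal * Matrix.diagonal (fun i => ((lam:ℂ) - (evN i : ℂ))⁻¹) *
            (ON.map Complex.ofReal)ᵀ) *ᵥ
            (((lam : ℂ) • (1 : Matrix (Fin p) (Fin p) ℂ) - YCᵀ * YC) *ᵥ xiC) := by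
            rw [Matrix.mulVec_mulVec]
        _ = 0 := by rw [hker, Matrix.mulVec_zero]
    have hxi0 : ∀ a, xi a = 0 := by
      intro a
      have h1 : xiC a = 0 := by rw [hxiC0]; rfl
      rw [hxiC] at h1
      simpa using h1
    rw [show xi = fun _ => (0:ℝ) from funext hxi0] at hxi_unit
    simp [dotProduct] at hxi_unit
  obtain ⟨i₀, hi₀⟩ := hex
  obtain ⟨t, ht⟩ := hlam_simple (fun a => ON a i₀) (by rw [hcolN i₀, hi₀])
  have ht2 : t * t = 1 := by
    have h1 : ((fun a => ON a i₀) ⬝ᵥ (fun a => ON a i₀)) = (1:ℝ) := by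
      rw [hONentry i₀ i₀]; simp
    rw [ht, smul_dotProduct, dotProduct_smul, hxi_unit] at h1
    simpa [smul_eq_mul] using h1
  have ht0 : t ≠ 0 := by
    intro h; rw [h] at ht2; simp at ht2
  have huniq : ∀ i, evN i = lam → i = i₀ := by
    intro i hi
    by_contra hne
    obtain ⟨s, hs⟩ := hlam_simple (fun a => ON a i) (by rw [hcolN i, hi])
    have hs2 : s * s = 1 := by
      have h1 : ((fun a => ON a i) ⬝ᵥ (fun a => ON a i)) = (1:ℝ) := by
        rw [hONentry i i]; simp
      rw [hs, smul_dotProduct, dotProduct_smul, hxi_unit] at h1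
      simpa [smul_eq_mul] using h1
    have horth : ((fun a => ON a i) ⬝ᵥ (fun a => ON a i₀)) = 0 := by
      rw [hONentry i i₀]; simp [hne]
    rw [hs, ht, smul_dotProduct, dotProduct_smul, hxi_unit] at horth
    simp only [smul_eq_mul, mul_one] at horth
    have : s ≠ 0 := fun h => by rw [h] at hs2; simp at hs2
    exact (mul_ne_zero this ht0) horth
  have htC : (t : ℂ) * (t : ℂ) = 1 := by exact_mod_cast ht2
  have hcf : cfun i₀ = ((uR ⬝ᵥ xi : ℝ) : ℂ) ^ 2 := by
    calc cfun i₀ = ((t * (uR ⬝ᵥ xi) : ℝ) : ℂ) ^ 2 := by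
          simp only [hcfun]
          rw [ht, dotProduct_smul, smul_eq_mul]
      _ = ((t : ℂ)) ^ 2 * ((uR ⬝ᵥ xi : ℝ) : ℂ) ^ 2 := by push_cast; ring
      _ = ((uR ⬝ᵥ xi : ℝ) : ℂ) ^ 2 := by rw [sq, htC, one_mul]
  -- ================= integration =================
  have hcont_sqrt : ContinuousOn (fun z => z ^ (1/2:ℂ)) (sphere c R) := by
    intro z hz
    exact ((differentiableAt_id.cpow (differentiableAt_const _)
      (hslit z (sphere_subset_closedBall hz))).continuousAt).continuousWithinAt
  have hint : ∀ i : Fin p, CircleIntegrable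
      (fun z => cfun i * ((z - (evN i : ℂ))⁻¹ * z ^ (1/2:ℂ))) c R := by
    intro i
    apply ContinuousOn.circleIntegrable hR.le
    apply continuousOn_const.mul
    apply ContinuousOn.mul _ hcont_sqrt
    apply ContinuousOn.inv₀ (continuousOn_id.sub continuousOn_const)
    intro z hz
    exact sub_ne_zero.mpr ((main z hz).1 i)
  have hIcirc : circleIntegral
      (fun z =>
        (fun s : Fin k ⊕ Fin k => if s = Sum.inl j then (1 : ℂ) else 0) ⬝ᵥ
          ((dBlockC d)⁻¹ * (masterM Xt U V d z)⁻¹ * (dBlockC d)⁻¹).mulVec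
            (fun s : Fin k ⊕ Fin k => if s = Sum.inl j then (1 : ℂ) else 0))
      c R = cfun i₀ * (2 * Real.pi * Complex.I * (lam : ℂ) ^ (1/2:ℂ)) := by
    rw [circleIntegral.integral_congr hR.le (fun z hz => (main z hz).2)]
    rw [circleIntegral_finset_sum Finset.univ
      (fun i z => cfun i * ((z - (evN i : ℂ))⁻¹ * z ^ (1/2:ℂ))) (fun i _ => hint i)]
    rw [Finset.sum_eq_single i₀]
    · rw [circleIntegral.integral_const_mul]
      rw [← hi₀] at hlam_in ⊢
      rw [integral_sqrt_pole hR hslit (evN i₀ : ℂ) hlam_in]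
    · intro i _ hne
      rw [circleIntegral.integral_const_mul]
      have hnl : evN i ≠ lam := fun h => hne (huniq i h)
      rw [integral_sqrt_pole_out hR hslit (evN i : ℂ) (hout i hnl), mul_zero]
    · intro h
      exact absurd (Finset.mem_univ i₀) h
  rw [hIcirc, hcf]
  have hsq : ((Real.sqrt lam : ℝ) : ℂ) = (lam : ℂ) ^ (1/2:ℂ) := by
    rw [Real.sqrt_eq_rpow, Complex.ofReal_cpow hlam_pos.le]
    norm_num
  rw [hsq]
  have hKne : (2 * (Real.pi : ℂ) * Complex.I * (lam : ℂ) ^ (1/2:ℂ)) ≠ 0 := by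
    have hlne : (lam : ℂ) ≠ 0 := Complex.ofReal_ne_zero.mpr hlam_pos.ne'
    have h2 : (lam : ℂ) ^ (1/2:ℂ) ≠ 0 := by
      simp [Complex.cpow_def_of_ne_zero hlne, Complex.exp_ne_zero]
    refine mul_ne_zero (mul_ne_zero (mul_ne_zero two_ne_zero ?_) Complex.I_ne_zero) h2
    exact Complex.ofReal_ne_zero.mpr Real.pi_ne_zero
  field_simp
  exact (mul_div_cancel_right₀ _ (right_ne_zero_of_mul hKne)).symm
end

section
/- (Cubic self-consistent equation for i.i.d. sketching.) Let γ, ξ ∈ ℂ and let z, m, u ∈ ℂ with m ≠ 0. Suppose that u satisfies the Marchenko–Pastur quadratic at the point w = −1/m, i.e. −(ξ/m)·u² + (ξ − 1 − 1/m)·u + 1 = 0, and that z = −γ/m + (ξ/m)·(1 − u/m). Then m satisfies the cubic equation z²·m³ − z·(1 + ξ − 2γ)·m² − (z + (1 − γ)(γ − ξ))·m − γ = 0. -/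
/-- **Cubic self-consistent equation for i.i.d. sketching.** If `u` satisfies the
Marchenko–Pastur quadratic at `w = −1/m`, i.e. `−(ξ/m) u² + (ξ − 1 − 1/m) u + 1 = 0`,
and `z = −γ/m + (ξ/m)(1 − u/m)`, then `m` satisfies the cubic
`z² m³ − z (1 + ξ − 2γ) m² − (z + (1 − γ)(γ − ξ)) m − γ = 0`. -/
theorem cubic_selfconsistent_equation_iid
    (γ ξ z m u : ℂ) (hm : m ≠ 0)
    (hquad : -(ξ / m) * u ^ 2 + (ξ - 1 - 1 / m) * u + 1 = 0)
    (hz : z = -γ / m + (ξ / m) * (1 - u / m)) :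
    z ^ 2 * m ^ 3 - z * (1 + ξ - 2 * γ) * m ^ 2 -
      (z + (1 - γ) * (γ - ξ)) * m - γ = 0 := by
  have key : m ^ 2 * (z ^ 2 * m ^ 3 - z * (1 + ξ - 2 * γ) * m ^ 2 -
      (z + (1 - γ) * (γ - ξ)) * m - γ) = 0 := by
    field_simp at hquad hz
    linear_combination m * (-ξ) * hquad + m * (-(ξ*u + (ξ-γ)*m - z*m^2) + (ξ-1)*m - 1) * hz
  rcases mul_eq_zero.1 key with h | h
  · exact absurd h (pow_ne_zero 2 hm)
  · exact h
end
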